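/- arXiv:2111.10681 — 2 statements merged into one kernel-verified Lean document; each statement's English description precedes it below -/
import Mathlib

section
/- Let α = (α_1,…,α_n) be a sequence of nonnegative integers summing to n whose support is an upper interval, i.e. for some t one has α_k ≥ 1 exactly when t ≤ k ≤ n. Then there is exactly one valley permutation f_α of {1,…,n} whose shape equals α, and exactly one inverse valley permutation of shape α, namely f_α⁻¹. -/
open scoped Classical

noncomputable section

namespace RajRegularity

variable {n : ℕ}

/-- Maximal length of an increasing subsequence of `w(i), …, w(n)` beginning with `w(i)`:
the largest cardinality of a set `s` of positions that contains `i`, consists of positions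
`≥ i`, and on which `w` is strictly increasing. -/
def lisFrom (w : Equiv.Perm (Fin n)) (i : Fin n) : ℕ :=
  (Finset.univ.filter fun s : Finset (Fin n) =>
      i ∈ s ∧ (∀ j ∈ s, i ≤ j) ∧ ∀ j ∈ s, ∀ k ∈ s, j < k → w j < w k).sup Finset.card

/-- `rajCode w i = (n − i + 1) −` (maximal length of an increasing subsequence of
`w(i), …, w(n)` beginning with `w(i)`); here positions are 0-based, so the number of
positions `≥ i` is `n - i`. -/
def rajCode (w : Equiv.Perm (Fin n)) (i : Fin n) : ℕ :=
  (n - (i : ℕ)) - lisFrom w i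

/-- The Rajchgot index `raj w = Σᵢ rajCode w i`. -/
def raj (w : Equiv.Perm (Fin n)) : ℕ := ∑ i, rajCode w i

/-- The number of inversions of `w`: pairs of positions `i < j` with `w i > w j`. -/
def invNum (w : Equiv.Perm (Fin n)) : ℕ :=
  (Finset.univ.filter fun p : Fin n × Fin n => p.1 < p.2 ∧ w p.2 < w p.1).card

/-- The `i`-th entry of the inv code: `ℓ_i(w) = #{ j : i < j, w j < w i }`. -/
def ellCode (w : Equiv.Perm (Fin n)) (i : Fin n) : ℕ :=
  (Finset.univ.filter fun j : Fin n => i < j ∧ w j < w i).card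

/-- The set of descent positions of `w` (0-based position `j` with `w j > w (j+1)`). -/
def descents (w : Equiv.Perm (Fin n)) : Finset (Fin n) :=
  Finset.univ.filter fun j : Fin n =>
    if h : (j : ℕ) + 1 < n then w ⟨(j : ℕ) + 1, h⟩ < w j else False

/-- The major index: the sum of the (1-based) descent positions of `w`. -/
def maj (w : Equiv.Perm (Fin n)) : ℕ := ∑ j ∈ descents w, ((j : ℕ) + 1)

/-- `mCode w i`: the number of descents of `w` at positions `≥ i`. -/
def mCode (w : Equiv.Perm (Fin n)) (i : Fin n) : ℕ :=
  ((descents w).filter fun j => i ≤ j).card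

/-- `w` is dominant iff it avoids the pattern 132. -/
def Dominant (w : Equiv.Perm (Fin n)) : Prop :=
  ¬ ∃ i j k : Fin n, i < j ∧ j < k ∧ w i < w k ∧ w k < w j

/-- `w` is fireworks iff there are no positions `i < j` with `w j < w (j+1) < w i`. -/
def Fireworks (w : Equiv.Perm (Fin n)) : Prop :=
  ¬ ∃ (i j : Fin n) (h : (j : ℕ) + 1 < n),
      i < j ∧ w j < w ⟨(j : ℕ) + 1, h⟩ ∧ w ⟨(j : ℕ) + 1, h⟩ < w i

/-- `w` is inverse fireworks iff `w⁻¹` is fireworks. -/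
def InvFireworks (w : Equiv.Perm (Fin n)) : Prop := Fireworks w⁻¹

/-- `w` is a valley permutation: for some `a`, it is strictly decreasing on positions `≤ a`
and strictly increasing on positions `≥ a`. -/
def Valley (w : Equiv.Perm (Fin n)) : Prop :=
  ∃ a : ℕ, (∀ i j : Fin n, i < j → (j : ℕ) ≤ a → w j < w i) ∧
    ∀ i j : Fin n, a ≤ (i : ℕ) → i < j → w i < w j

/-- `eps w i` is the (1-based) blob index `ε_i(w) = i + r_i(w)`. -/
def eps (w : Equiv.Perm (Fin n)) (i : Fin n) : ℕ := (i : ℕ) + 1 + rajCode w i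

/-- The shape of `w`: `α_k(w) = #{ i : ε_i(w) = k }` (here `k : Fin n` stands for the
1-based index `k + 1`). -/
def shape (w : Equiv.Perm (Fin n)) : Fin n → ℕ := fun k =>
  (Finset.univ.filter fun i : Fin n => eps w i = (k : ℕ) + 1).card

/-- Dominance order on shapes: `α ⪰ β` iff every tail sum of `α` is at least the
corresponding tail sum of `β`. -/
def Dominates (α β : Fin n → ℕ) : Prop :=
  ∀ m : Fin n,
    ∑ k ∈ Finset.univ.filter (fun k : Fin n => m ≤ k), β k ≤
      ∑ k ∈ Finset.univ.filter (fun k : Fin n => m ≤ k), α k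

/-- Right weak order: `u ≤_R w` iff `w = u * v` length-additively. -/
def leR (u w : Equiv.Perm (Fin n)) : Prop :=
  ∃ v : Equiv.Perm (Fin n), w = u * v ∧ invNum w = invNum u + invNum v

/-- Left weak order: `u ≤_L w` iff `w = v * u` length-additively. -/
def leL (u w : Equiv.Perm (Fin n)) : Prop :=
  ∃ v : Equiv.Perm (Fin n), w = v * u ∧ invNum w = invNum v + invNum u

/-- Two-sided weak order: the transitive closure of the union of left and right weak
orders (both are reflexive, so we may use the reflexive-transitive closure). -/
def leLR (u w : Equiv.Perm (Fin n)) : Prop :=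
  Relation.ReflTransGen (fun a b : Equiv.Perm (Fin n) => leL a b ∨ leR a b) u w

/-- The maximum of the block of the set partition `π(w)` containing the value `v`;
the block of `v` is `{ v' : ε_{w⁻¹ v'}(w) = ε_{w⁻¹ v}(w) }`. -/
def blockMax (w : Equiv.Perm (Fin n)) (v : Fin n) : ℕ :=
  ((Finset.univ.filter fun v' : Fin n => eps w (w⁻¹ v') = eps w (w⁻¹ v)).max'
      ⟨v, Finset.mem_filter.mpr ⟨Finset.mem_univ v, rfl⟩⟩).val

/-- The fireworks map `Φ`: the one-line word of `Φ w` lists the blocks of `π(w)` in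
increasing order of their maxima, each block written in decreasing order.  Equivalently,
`Φ w` sorts the values by the key (max of block, value reversed), lexicographically. -/
def Phi (w : Equiv.Perm (Fin n)) : Equiv.Perm (Fin n) :=
  Tuple.sort fun v : Fin n => n * blockMax w v + (n - 1 - (v : ℕ))

/-- The inverse fireworks map `Φ_inv w = Φ(w⁻¹)⁻¹`. -/
def PhiInv (w : Equiv.Perm (Fin n)) : Equiv.Perm (Fin n) := (Phi w⁻¹)⁻¹

/-- Partial sums of a sequence of block sizes. -/
def psum (a : ℕ → ℕ) (m : ℕ) : ℕ := ∑ j ∈ Finset.range m, a j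

/-- The index of the block (interval `[psum a m, psum a (m+1))`) containing the value `v`. -/
def blockIdx (n : ℕ) (a : ℕ → ℕ) (v : Fin n) : ℕ :=
  ((Finset.range n).filter fun m => psum a (m + 1) ≤ (v : ℕ)).card

/-- The layered permutation with block sizes `a 0, a 1, …`: it reverses each of the
consecutive intervals `[psum a m, psum a (m+1))` of `{0, …, n-1}`.  Equivalently, its
one-line word sorts the values by (block index, value reversed) lexicographically. -/
def layered (n : ℕ) (a : ℕ → ℕ) : Equiv.Perm (Fin n) :=
  Tuple.sort fun v : Fin n => n * blockIdx n a v + (n - 1 - (v : ℕ))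

/-- The layered permutation `e_α` associated to a shape `α : Fin n → ℕ`. -/
def eOf (α : Fin n → ℕ) : Equiv.Perm (Fin n) :=
  layered n fun m => if h : m < n then α ⟨m, h⟩ else 0
/-! ### Auxiliary machinery -/

theorem _root_.Equiv.Perm.apply_inv_self {α : Type*} (f : Equiv.Perm α) (x : α) : f (f⁻¹ x) = x :=
  f.apply_symm_apply x

theorem _root_.Equiv.Perm.inv_apply_self {α : Type*} (f : Equiv.Perm α) (x : α) : f⁻¹ (f x) = x :=
  f.symm_apply_apply x

section Aux

open Finset

private instance geAntisymm : IsAntisymm ℕ (fun x y : ℕ => y ≤ x) :=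
  ⟨fun _ _ h1 h2 => le_antisymm h2 h1⟩

/-- Two weakly `r`-sorted sequences on `[0, m)` with equal value counts agree. -/
theorem eqOn_of_sorted_counts (r : ℕ → ℕ → Prop) [IsAntisymm ℕ r] (f g : ℕ → ℕ) (m : ℕ)
    (hf : ∀ i j, i < j → j < m → r (f i) (f j)) (hg : ∀ i j, i < j → j < m → r (g i) (g j))
    (hc : ∀ k, ((Finset.range m).filter fun i => f i = k).card
        = ((Finset.range m).filter fun i => g i = k).card) :
    ∀ i, i < m → f i = g i := by
  have hsorted : ∀ h : ℕ → ℕ, (∀ i j, i < j → j < m → r (h i) (h j)) →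
      List.Pairwise r ((List.range m).map h) := by
    intro h hh
    rw [List.pairwise_iff_get]
    intro i j hij
    have hj : (j : ℕ) < m := by have := j.isLt; simpa using this
    simp only [List.get_eq_getElem, List.getElem_map, List.getElem_range]
    exact hh _ _ (by simpa using hij) hj
  have key : ∀ (h : ℕ → ℕ) (k : ℕ),
      Multiset.count k (↑((List.range m).map h) : Multiset ℕ)
        = ((Finset.range m).filter fun i => h i = k).card := by
    intro h k
    have h1 : (↑((List.range m).map h) : Multiset ℕ)
        = Multiset.map h (Finset.range m).val := rfl
    rw [h1, Multiset.count_map]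
    have h2 : ((Finset.range m).filter fun i => h i = k).card
        = Multiset.card (Multiset.filter (fun i => h i = k) (Finset.range m).val) := rfl
    rw [h2]
    congr 1
    exact Multiset.filter_congr (fun x _ => by constructor <;> (intro hh; exact hh.symm))
  have hperm : ((List.range m).map f).Perm ((List.range m).map g) := by
    rw [← Multiset.coe_eq_coe]
    ext k
    rw [key f k, key g k, hc k]
  have heq := List.Perm.eq_of_pairwise' (r := r) (hsorted f hf) (hsorted g hg) hperm
  intro i him
  have h1 : (((List.range m).map f).getD i 0) = ((List.range m).map g).getD i 0 := by
    rw [heq]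
  rwa [List.getD_eq_getElem _ _ (by simpa using him), List.getD_eq_getElem _ _ (by simpa using him),
    List.getElem_map, List.getElem_map, List.getElem_range] at h1

/-- Injective sequences with equal images have equal counts. -/
theorem counts_eq_of_image_eq (f g : ℕ → ℕ) (m : ℕ)
    (hfinj : ∀ i j, i < m → j < m → f i = f j → i = j)
    (hginj : ∀ i j, i < m → j < m → g i = g j → i = j)
    (himg : (Finset.range m).image f = (Finset.range m).image g) :
    ∀ k, ((Finset.range m).filter fun i => f i = k).card
        = ((Finset.range m).filter fun i => g i = k).card := by
  have key : ∀ h : ℕ → ℕ, (∀ i j, i < m → j < m → h i = h j → i = j) →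
      ∀ k, ((Finset.range m).filter fun i => h i = k).card
        = (if k ∈ (Finset.range m).image h then 1 else 0) := by
    intro h hinj k
    by_cases hk : k ∈ (Finset.range m).image h
    · simp only [hk, if_true]
      obtain ⟨i, hi, rfl⟩ := Finset.mem_image.mp hk
      rw [Finset.card_eq_one]
      refine ⟨i, ?_⟩
      ext j
      simp only [Finset.mem_filter, Finset.mem_range, Finset.mem_singleton]
      constructor
      · rintro ⟨hj, hji⟩
        exact hinj _ _ hj (Finset.mem_range.mp hi) hji
      · rintro rfl
        exact ⟨Finset.mem_range.mp hi, rfl⟩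
    · simp only [hk, if_false]
      rw [Finset.card_eq_zero, Finset.filter_eq_empty_iff]
      intro j hj hji
      exact hk (Finset.mem_image.mpr ⟨j, hj, hji⟩)
  intro k
  rw [key f hfinj k, key g hginj k, himg]

end Aux
/-- Canonical valley structure: `w` is strictly decreasing up to position `p` and strictly
increasing from position `p` on. -/
def IsCV (w : Equiv.Perm (Fin n)) (p : Fin n) : Prop :=
  (∀ i j : Fin n, i < j → j ≤ p → w j < w i) ∧
    ∀ i j : Fin n, p ≤ i → i < j → w i < w j

theorem IsCV.valley {w : Equiv.Perm (Fin n)} {p : Fin n} (h : IsCV w p) : Valley w :=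
  ⟨(p : ℕ), fun i j hij hjp => h.1 i j hij hjp, fun i j hpi hij => h.2 i j hpi hij⟩

theorem Valley.isCV {w : Equiv.Perm (Fin n)} (h : Valley w) (hn : 0 < n) :
    IsCV w (w⁻¹ ⟨0, hn⟩) := by
  obtain ⟨a, h1, h2⟩ := h
  set p := w⁻¹ ⟨0, hn⟩ with hp
  have hwp : w p = ⟨0, hn⟩ := w.apply_inv_self _
  have hz : ((⟨0, hn⟩ : Fin n) : ℕ) = 0 := rfl
  have hne : ∀ i : Fin n, i ≠ p → (⟨0, hn⟩ : Fin n) < w i := by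
    intro i hip
    have : w i ≠ ⟨0, hn⟩ := fun hc => hip (by rw [← hwp] at hc; exact w.injective hc)
    rw [Fin.lt_def]
    have := (Fin.val_ne_of_ne this)
    omega
  constructor
  · intro i j hij hjp
    by_cases hja : (j : ℕ) ≤ a
    · exact h1 i j hij hja
    · push_neg at hja
      rcases lt_or_eq_of_le hjp with hjp' | hjp'
      · exfalso
        have := h2 j p (le_of_lt hja) hjp'
        rw [hwp, Fin.lt_def] at this
        omega
      · rw [hjp', hwp]
        exact hne i (fun hc => absurd (hc.trans hjp'.symm) (ne_of_lt hij))
  · intro i j hpi hij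
    by_cases hia : a ≤ (i : ℕ)
    · exact h2 i j hia hij
    · push_neg at hia
      rcases lt_or_eq_of_le hpi with hpi' | hpi'
      · exfalso
        have := h1 p i hpi' (le_of_lt hia)
        rw [hwp, Fin.lt_def] at this
        omega
      · rw [← hpi', hwp]
        exact hne j (fun hc => absurd (hc.trans hpi') (ne_of_gt hij))
theorem IsCV.apply_p {w : Equiv.Perm (Fin n)} {p : Fin n} (h : IsCV w p) :
    ((w p : Fin n) : ℕ) = 0 := by
  by_contra hc
  -- w p is not the minimum value; but some position attains 0
  have hn : 0 < n := p.pos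
  obtain ⟨q, hq⟩ : ∃ q, w q = ⟨0, hn⟩ := ⟨w⁻¹ ⟨0, hn⟩, w.apply_inv_self _⟩
  have hqp : q ≠ p := fun hqp => hc (by rw [← hqp, hq])
  rcases lt_or_gt_of_ne hqp with hlt | hgt
  · have := h.1 q p hlt le_rfl
    rw [hq] at this
    exact absurd this (by rw [Fin.lt_def]; simp)
  · have := h.2 p q le_rfl hgt
    rw [hq] at this
    exact absurd this (by rw [Fin.lt_def]; simp)

/-- On the decreasing head, `q + w q ≤ n - 1`. -/
theorem IsCV.head_ub {w : Equiv.Perm (Fin n)} {p : Fin n} (h : IsCV w p) {q : Fin n}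
    (hq : q ≤ p) : (q : ℕ) + (w q : ℕ) + 1 ≤ n := by
  classical
  have himg : (Finset.Iic q).image w ⊆ Finset.Ici (w q) := by
    intro v hv
    obtain ⟨j, hj, rfl⟩ := Finset.mem_image.mp hv
    rw [Finset.mem_Iic] at hj
    rw [Finset.mem_Ici]
    rcases lt_or_eq_of_le hj with hlt | rfl
    · exact le_of_lt (h.1 j q hlt hq)
    · exact le_rfl
  have hcard := Finset.card_le_card himg
  rw [Finset.card_image_of_injective _ w.injective, Fin.card_Iic, Fin.card_Ici] at hcard
  have := (w q).isLt
  omega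

/-- On the decreasing head, `p ≤ q + w q`. -/
theorem IsCV.head_lb {w : Equiv.Perm (Fin n)} {p : Fin n} (h : IsCV w p) {q : Fin n}
    (hq : q ≤ p) : (p : ℕ) ≤ (q : ℕ) + (w q : ℕ) := by
  classical
  have himg : (Finset.Icc q p).image w ⊆ Finset.Iic (w q) := by
    intro v hv
    obtain ⟨j, hj, rfl⟩ := Finset.mem_image.mp hv
    rw [Finset.mem_Icc] at hj
    rw [Finset.mem_Iic]
    rcases lt_or_eq_of_le hj.1 with hlt | rfl
    · exact le_of_lt (h.1 q j hlt hj.2)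
    · exact le_rfl
  have hcard := Finset.card_le_card himg
  rw [Finset.card_image_of_injective _ w.injective, Fin.card_Icc, Fin.card_Iic] at hcard
  have hqp : (q : ℕ) ≤ (p : ℕ) := hq
  omega

/-- Composing a filter with a permutation preserves cardinality. -/
theorem card_filter_perm (w : Equiv.Perm (Fin n)) (P : Fin n → Prop)
    [DecidablePred P] [DecidablePred fun j => P (w j)] :
    (Finset.univ.filter fun j => P (w j)).card = (Finset.univ.filter P).card := by
  rw [← Finset.card_image_of_injective (Finset.univ.filter fun j => P (w j)) w.injective]
  congr 1
  ext v
  simp only [Finset.mem_image, Finset.mem_filter, Finset.mem_univ, true_and]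
  constructor
  · rintro ⟨j, hj, rfl⟩; exact hj
  · intro hv; exact ⟨w⁻¹ v, by simpa using hv, w.apply_inv_self v⟩

theorem card_filter_le (i : Fin n) :
    (Finset.univ.filter fun j : Fin n => i ≤ j).card = n - (i : ℕ) := by
  classical
  rw [show (Finset.univ.filter fun j : Fin n => i ≤ j) = Finset.Ici i from by
    ext j; simp [Finset.mem_Ici]]
  exact Fin.card_Ici i
theorem lisFrom_eq_of_max (w : Equiv.Perm (Fin n)) (i : Fin n) (s₀ : Finset (Fin n))
    (h1 : i ∈ s₀) (h2 : ∀ j ∈ s₀, i ≤ j)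
    (h3 : ∀ j ∈ s₀, ∀ k ∈ s₀, j < k → w j < w k)
    (hmax : ∀ s : Finset (Fin n), i ∈ s → (∀ j ∈ s, i ≤ j) →
      (∀ j ∈ s, ∀ k ∈ s, j < k → w j < w k) → s ⊆ s₀) :
    lisFrom w i = s₀.card := by
  classical
  unfold lisFrom
  apply le_antisymm
  · apply Finset.sup_le
    intro s hs
    rw [Finset.mem_filter] at hs
    exact Finset.card_le_card (hmax s hs.2.1 hs.2.2.1 hs.2.2.2)
  · exact Finset.le_sup (Finset.mem_filter.mpr ⟨Finset.mem_univ _, h1, h2, h3⟩)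

theorem IsCV.lisFrom_tail {w : Equiv.Perm (Fin n)} {p : Fin n} (h : IsCV w p) {i : Fin n}
    (hi : p ≤ i) : lisFrom w i = n - (i : ℕ) := by
  classical
  rw [lisFrom_eq_of_max w i (Finset.univ.filter fun j => i ≤ j)
      (by simp) (fun j hj => (Finset.mem_filter.mp hj).2)
      (fun j hj k hk hjk => h.2 j k (le_trans hi (Finset.mem_filter.mp hj).2) hjk)
      (fun s hs1 hs2 _ => fun j hj => Finset.mem_filter.mpr ⟨Finset.mem_univ _, hs2 j hj⟩)]
  exact card_filter_le i

theorem IsCV.card_headset {w : Equiv.Perm (Fin n)} {p : Fin n} (h : IsCV w p) {i : Fin n}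
    (hi : i ≤ p) :
    (Finset.univ.filter fun j : Fin n => w i < w j ∧ p < j).card
      = n - 1 - ((w i : Fin n) : ℕ) - (i : ℕ) := by
  classical
  have hsplit := Finset.card_filter_add_card_filter_not
    (s := Finset.univ.filter fun j : Fin n => w i < w j) (p := fun j : Fin n => p < j)
  rw [Finset.filter_filter, Finset.filter_filter] at hsplit
  have hneg : (Finset.univ.filter fun j : Fin n => w i < w j ∧ ¬ p < j)
      = Finset.univ.filter fun j : Fin n => j < i := by
    ext j
    simp only [Finset.mem_filter, Finset.mem_univ, true_and, not_lt]
    constructor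
    · rintro ⟨hw, hjp⟩
      rcases lt_trichotomy j i with hlt | rfl | hgt
      · exact hlt
      · exact absurd hw (lt_irrefl _)
      · exact absurd (h.1 i j hgt hjp) (asymm hw)
    · intro hj
      exact ⟨h.1 j i hj hi, le_trans (le_of_lt hj) hi⟩
  have htot : (Finset.univ.filter fun j : Fin n => w i < w j).card
      = n - 1 - ((w i : Fin n) : ℕ) := by
    have h1 := card_filter_perm w (fun v => w i < v)
    rw [show (Finset.univ.filter fun v : Fin n => w i < v) = Finset.Ioi (w i) from by
      ext v; simp [Finset.mem_Ioi], Fin.card_Ioi] at h1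
    exact h1
  have hlio : (Finset.univ.filter fun j : Fin n => j < i).card = (i : ℕ) := by
    rw [show (Finset.univ.filter fun j : Fin n => j < i) = Finset.Iio i from by
      ext v; simp [Finset.mem_Iio]]
    exact Fin.card_Iio _
  rw [hneg, hlio, htot] at hsplit
  have hub := h.head_ub hi
  omega

theorem IsCV.lisFrom_head {w : Equiv.Perm (Fin n)} {p : Fin n} (h : IsCV w p) {i : Fin n}
    (hi : i ≤ p) : lisFrom w i = n - (i : ℕ) - ((w i : Fin n) : ℕ) := by
  classical
  set s₀ : Finset (Fin n) := insert i (Finset.univ.filter fun j => w i < w j ∧ p < j) with hs₀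
  have hins : i ∉ (Finset.univ.filter fun j : Fin n => w i < w j ∧ p < j) := by
    simp only [Finset.mem_filter, Finset.mem_univ, true_and, not_and]
    intro hc; exact absurd hc (lt_irrefl _)
  rw [lisFrom_eq_of_max w i s₀ (Finset.mem_insert_self _ _)
      ?h2 ?h3 ?hmax]
  · rw [hs₀, Finset.card_insert_of_notMem hins, h.card_headset hi]
    have hub := h.head_ub hi
    have := i.isLt
    omega
  case h2 =>
    intro j hj
    rcases Finset.mem_insert.mp hj with rfl | hj'
    · exact le_rfl
    · have := (Finset.mem_filter.mp hj').2.2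
      exact le_of_lt (lt_of_le_of_lt hi this)
  case h3 =>
    intro j hj k hk hjk
    rcases Finset.mem_insert.mp hj with rfl | hj'
    · rcases Finset.mem_insert.mp hk with rfl | hk'
      · exact absurd hjk (lt_irrefl _)
      · exact (Finset.mem_filter.mp hk').2.1
    · rcases Finset.mem_insert.mp hk with rfl | hk'
      · have hpj := (Finset.mem_filter.mp hj').2.2
        exact absurd (lt_trans hpj hjk) (not_lt_of_ge hi)
      · exact h.2 j k (le_of_lt (Finset.mem_filter.mp hj').2.2) hjk
  case hmax =>
    intro s hs1 hs2 hs3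
    intro j hj
    by_cases hji : j = i
    · rw [hji]; exact Finset.mem_insert_self _ _
    · have hij : i < j := lt_of_le_of_ne (hs2 j hj) (Ne.symm hji)
      have hw : w i < w j := hs3 i hs1 j hj hij
      refine Finset.mem_insert_of_mem (Finset.mem_filter.mpr ⟨Finset.mem_univ _, hw, ?_⟩)
      by_contra hpj
      push_neg at hpj
      exact absurd (h.1 i j hij hpj) (asymm hw)

theorem IsCV.eps_tail {w : Equiv.Perm (Fin n)} {p : Fin n} (h : IsCV w p) {i : Fin n}
    (hi : p ≤ i) : eps w i = (i : ℕ) + 1 := by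
  unfold eps rajCode
  rw [h.lisFrom_tail hi]
  omega

theorem IsCV.eps_head {w : Equiv.Perm (Fin n)} {p : Fin n} (h : IsCV w p) {i : Fin n}
    (hi : i ≤ p) : eps w i = (i : ℕ) + 1 + ((w i : Fin n) : ℕ) := by
  unfold eps rajCode
  rw [h.lisFrom_head hi]
  have hub := h.head_ub hi
  have := i.isLt
  omega
/-- For a tail position `q ≥ p`, the value is at most the position. -/
theorem IsCV.tail_vle {w : Equiv.Perm (Fin n)} {p : Fin n} (h : IsCV w p) {q : Fin n}
    (hq : p ≤ q) : ((w q : Fin n) : ℕ) ≤ (q : ℕ) := by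
  classical
  have himg : (Finset.Ici q).image w ⊆ Finset.Ici (w q) := by
    intro v hv
    obtain ⟨j, hj, rfl⟩ := Finset.mem_image.mp hv
    rw [Finset.mem_Ici] at hj
    rw [Finset.mem_Ici]
    rcases lt_or_eq_of_le hj with hlt | rfl
    · exact le_of_lt (h.2 q j hq hlt)
    · exact le_rfl
  have hcard := Finset.card_le_card himg
  rw [Finset.card_image_of_injective _ w.injective, Fin.card_Ici, Fin.card_Ici] at hcard
  have := q.isLt
  omega

theorem IsCV.lisFrom_inv_tail {w : Equiv.Perm (Fin n)} {p : Fin n} (h : IsCV w p) {v : Fin n}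
    (hv : p ≤ w⁻¹ v) : lisFrom w⁻¹ v = n - ((w⁻¹ v : Fin n) : ℕ) := by
  classical
  set q := w⁻¹ v with hqdef
  have hwq : w q = v := w.apply_inv_self v
  have hmono : ∀ v' v'' : Fin n, v' < v'' → p ≤ w⁻¹ v' → p ≤ w⁻¹ v'' → w⁻¹ v' < w⁻¹ v'' := by
    intro v' v'' hlt h1 h2
    rcases lt_trichotomy (w⁻¹ v') (w⁻¹ v'') with hq' | hq' | hq'
    · exact hq'
    · exact absurd (w⁻¹.injective hq') (ne_of_lt hlt)
    · have := h.2 _ _ h2 hq'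
      rw [w.apply_inv_self, w.apply_inv_self] at this
      exact absurd this (asymm hlt)
  rw [lisFrom_eq_of_max w⁻¹ v (Finset.univ.filter fun v' => v ≤ v' ∧ p ≤ w⁻¹ v')
      (Finset.mem_filter.mpr ⟨Finset.mem_univ _, le_rfl, hv⟩)
      (fun v' hv' => (Finset.mem_filter.mp hv').2.1)
      ?incr ?max]
  · -- cardinality
    have h1 := card_filter_perm w⁻¹ (fun j => v ≤ w j ∧ p ≤ j)
    have h2 : (Finset.univ.filter fun v' : Fin n => v ≤ w (w⁻¹ v') ∧ p ≤ w⁻¹ v')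
        = Finset.univ.filter fun v' : Fin n => v ≤ v' ∧ p ≤ w⁻¹ v' := by
      ext v'; simp [w.apply_inv_self]
    rw [h2] at h1
    rw [h1]
    have h3 : (Finset.univ.filter fun j : Fin n => v ≤ w j ∧ p ≤ j)
        = Finset.univ.filter fun j : Fin n => q ≤ j := by
      ext j
      simp only [Finset.mem_filter, Finset.mem_univ, true_and]
      constructor
      · rintro ⟨hvw, hpj⟩
        by_contra hjq
        push_neg at hjq
        have := h.2 j q hpj hjq
        rw [hwq] at this
        exact absurd this (not_lt_of_ge hvw)
      · intro hqj
        refine ⟨?_, le_trans hv hqj⟩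
        rcases lt_or_eq_of_le hqj with hlt | rfl
        · have := h.2 q j hv hlt
          rw [hwq] at this
          exact le_of_lt this
        · rw [hwq]
    rw [h3]
    exact card_filter_le q
  case incr =>
    intro v' hv' v'' hv'' hlt
    have h1 := (Finset.mem_filter.mp hv').2.2
    have h2 := (Finset.mem_filter.mp hv'').2.2
    exact hmono _ _ hlt h1 h2
  case max =>
    intro s hs1 hs2 hs3
    intro v' hv'
    refine Finset.mem_filter.mpr ⟨Finset.mem_univ _, hs2 v' hv', ?_⟩
    by_cases hvv : v' = v
    · rw [hvv]; exact hv
    · have hlt : v < v' := lt_of_le_of_ne (hs2 v' hv') (Ne.symm hvv)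
      have := hs3 v hs1 v' hv' hlt
      exact le_trans hv (le_of_lt this)
theorem IsCV.lisFrom_inv_head {w : Equiv.Perm (Fin n)} {p : Fin n} (h : IsCV w p) {v : Fin n}
    (hv : w⁻¹ v ≤ p) : lisFrom w⁻¹ v = n - (v : ℕ) - ((w⁻¹ v : Fin n) : ℕ) := by
  classical
  set q := w⁻¹ v with hqdef
  have hwq : w q = v := w.apply_inv_self v
  have hub : (q : ℕ) + (v : ℕ) + 1 ≤ n := by
    have := h.head_ub hv
    rw [hwq] at this
    omega
  have hmono : ∀ v' v'' : Fin n, v' < v'' → p ≤ w⁻¹ v' → p ≤ w⁻¹ v'' → w⁻¹ v' < w⁻¹ v'' := by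
    intro v' v'' hlt h1 h2
    rcases lt_trichotomy (w⁻¹ v') (w⁻¹ v'') with hq' | hq' | hq'
    · exact hq'
    · exact absurd (w⁻¹.injective hq') (ne_of_lt hlt)
    · have := h.2 _ _ h2 hq'
      rw [w.apply_inv_self, w.apply_inv_self] at this
      exact absurd this (asymm hlt)
  set s₀ : Finset (Fin n) := insert v (Finset.univ.filter fun v' => v < v' ∧ p ≤ w⁻¹ v')
    with hs₀
  have hins : v ∉ (Finset.univ.filter fun v' : Fin n => v < v' ∧ p ≤ w⁻¹ v') := by
    simp only [Finset.mem_filter, Finset.mem_univ, true_and, not_and]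
    intro hc; exact absurd hc (lt_irrefl _)
  rw [lisFrom_eq_of_max w⁻¹ v s₀ (Finset.mem_insert_self _ _) ?h2 ?h3 ?hmax]
  · rw [hs₀, Finset.card_insert_of_notMem hins]
    -- compute the filter cardinality
    have h1 := card_filter_perm w⁻¹ (fun j => v < w j ∧ p ≤ j)
    have h2 : (Finset.univ.filter fun v' : Fin n => v < w (w⁻¹ v') ∧ p ≤ w⁻¹ v')
        = Finset.univ.filter fun v' : Fin n => v < v' ∧ p ≤ w⁻¹ v' := by
      ext v'; simp [w.apply_inv_self]
    rw [h2] at h1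
    rw [h1]
    have hsplit := Finset.card_filter_add_card_filter_not
      (s := Finset.univ.filter fun j : Fin n => v < w j) (p := fun j : Fin n => p ≤ j)
    rw [Finset.filter_filter, Finset.filter_filter] at hsplit
    have hneg : (Finset.univ.filter fun j : Fin n => v < w j ∧ ¬ p ≤ j)
        = Finset.univ.filter fun j : Fin n => j < q := by
      ext j
      simp only [Finset.mem_filter, Finset.mem_univ, true_and, not_le]
      constructor
      · rintro ⟨hw, hjp⟩
        rcases lt_trichotomy j q with hlt | rfl | hgt
        · exact hlt
        · rw [hwq] at hw; exact absurd hw (lt_irrefl _)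
        · have := h.1 q j hgt (le_of_lt hjp)
          rw [hwq] at this
          exact absurd this (asymm hw)
      · intro hj
        have hw := h.1 j q hj hv
        rw [hwq] at hw
        exact ⟨hw, lt_of_lt_of_le hj hv⟩
    have htot : (Finset.univ.filter fun j : Fin n => v < w j).card
        = n - 1 - (v : ℕ) := by
      have ht1 := card_filter_perm w (fun u => v < u)
      rw [show (Finset.univ.filter fun u : Fin n => v < u) = Finset.Ioi v from by
        ext u; simp [Finset.mem_Ioi], Fin.card_Ioi] at ht1
      exact ht1
    have hlio : (Finset.univ.filter fun j : Fin n => j < q).card = (q : ℕ) := by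
      rw [show (Finset.univ.filter fun j : Fin n => j < q) = Finset.Iio q from by
        ext u; simp [Finset.mem_Iio], Fin.card_Iio]
    rw [hneg, hlio, htot] at hsplit
    omega
  case h2 =>
    intro v' hv'
    rcases Finset.mem_insert.mp hv' with rfl | hj'
    · exact le_rfl
    · exact le_of_lt (Finset.mem_filter.mp hj').2.1
  case h3 =>
    intro v' hv' v'' hv'' hlt
    rcases Finset.mem_insert.mp hv' with rfl | hj'
    · rcases Finset.mem_insert.mp hv'' with rfl | hk'
      · exact absurd hlt (lt_irrefl _)
      · have hk2 := (Finset.mem_filter.mp hk').2.2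
        rcases lt_or_eq_of_le (le_trans hv hk2) with hlt2 | heq
        · exact hlt2
        · exact absurd (w⁻¹.injective heq) (ne_of_lt hlt)
    · rcases Finset.mem_insert.mp hv'' with rfl | hk'
      · have := (Finset.mem_filter.mp hj').2.1
        exact absurd (lt_trans this hlt) (lt_irrefl _)
      · exact hmono _ _ hlt (Finset.mem_filter.mp hj').2.2 (Finset.mem_filter.mp hk').2.2
  case hmax =>
    intro s hs1 hs2 hs3
    intro v' hv'
    by_cases hvv : v' = v
    · rw [hvv]; exact Finset.mem_insert_self _ _
    · have hlt : v < v' := lt_of_le_of_ne (hs2 v' hv') (Ne.symm hvv)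
      have hq' := hs3 v hs1 v' hv' hlt
      refine Finset.mem_insert_of_mem (Finset.mem_filter.mpr ⟨Finset.mem_univ _, hlt, ?_⟩)
      by_contra hpv'
      push_neg at hpv'
      have := h.1 q (w⁻¹ v') hq' (le_of_lt hpv')
      rw [hwq, w.apply_inv_self] at this
      exact absurd this (asymm hlt)
theorem IsCV.eps_inv_tail {w : Equiv.Perm (Fin n)} {p : Fin n} (h : IsCV w p) {v : Fin n}
    (hv : p ≤ w⁻¹ v) : eps w⁻¹ v = ((w⁻¹ v : Fin n) : ℕ) + 1 := by
  have hle : (v : ℕ) ≤ ((w⁻¹ v : Fin n) : ℕ) := by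
    have := h.tail_vle hv
    rwa [w.apply_inv_self] at this
  unfold eps rajCode
  rw [h.lisFrom_inv_tail hv]
  have := (w⁻¹ v).isLt
  omega

theorem IsCV.eps_inv_head {w : Equiv.Perm (Fin n)} {p : Fin n} (h : IsCV w p) {v : Fin n}
    (hv : w⁻¹ v ≤ p) : eps w⁻¹ v = (v : ℕ) + 1 + ((w⁻¹ v : Fin n) : ℕ) := by
  have hub : ((w⁻¹ v : Fin n) : ℕ) + (v : ℕ) + 1 ≤ n := by
    have := h.head_ub hv
    rwa [w.apply_inv_self] at this
  unfold eps rajCode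
  rw [h.lisFrom_inv_head hv]
  omega

theorem IsCV.shape_eq {w : Equiv.Perm (Fin n)} {p : Fin n} (h : IsCV w p) (k : Fin n) :
    shape w k = (Finset.univ.filter fun i : Fin n =>
        i < p ∧ (i : ℕ) + ((w i : Fin n) : ℕ) = (k : ℕ)).card
      + (if (p : ℕ) ≤ (k : ℕ) then 1 else 0) := by
  classical
  unfold shape
  have hsplit := Finset.card_filter_add_card_filter_not
    (s := Finset.univ.filter fun i : Fin n => eps w i = (k : ℕ) + 1)
    (p := fun i : Fin n => i < p)
  rw [Finset.filter_filter, Finset.filter_filter] at hsplit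
  have h1 : (Finset.univ.filter fun i : Fin n => eps w i = (k : ℕ) + 1 ∧ i < p)
      = Finset.univ.filter fun i : Fin n =>
        i < p ∧ (i : ℕ) + ((w i : Fin n) : ℕ) = (k : ℕ) := by
    ext i
    simp only [Finset.mem_filter, Finset.mem_univ, true_and]
    constructor
    · rintro ⟨heps, hip⟩
      rw [h.eps_head (le_of_lt hip)] at heps
      exact ⟨hip, by omega⟩
    · rintro ⟨hip, hk⟩
      rw [h.eps_head (le_of_lt hip)]
      exact ⟨by omega, hip⟩
  have h2 : (Finset.univ.filter fun i : Fin n => eps w i = (k : ℕ) + 1 ∧ ¬ i < p)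
      = Finset.univ.filter fun i : Fin n => p ≤ i ∧ i = k := by
    ext i
    simp only [Finset.mem_filter, Finset.mem_univ, true_and, not_lt]
    constructor
    · rintro ⟨heps, hpi⟩
      rw [h.eps_tail hpi] at heps
      exact ⟨hpi, Fin.ext (by omega)⟩
    · rintro ⟨hpi, rfl⟩
      exact ⟨h.eps_tail hpi, hpi⟩
  have h3 : (Finset.univ.filter fun i : Fin n => p ≤ i ∧ i = k).card
      = if (p : ℕ) ≤ (k : ℕ) then 1 else 0 := by
    by_cases hpk : (p : ℕ) ≤ (k : ℕ)
    · rw [if_pos hpk]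
      rw [show (Finset.univ.filter fun i : Fin n => p ≤ i ∧ i = k) = {k} from by
        ext i
        simp only [Finset.mem_filter, Finset.mem_univ, true_and, Finset.mem_singleton]
        constructor
        · rintro ⟨_, rfl⟩; rfl
        · rintro rfl; exact ⟨hpk, rfl⟩]
      exact Finset.card_singleton k
    · rw [if_neg hpk]
      rw [Finset.card_eq_zero, Finset.filter_eq_empty_iff]
      rintro i - ⟨hpi, rfl⟩
      exact hpk hpi
  rw [h1, h2, h3] at hsplit
  omega

theorem IsCV.shape_inv {w : Equiv.Perm (Fin n)} {p : Fin n} (h : IsCV w p) :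
    shape w⁻¹ = shape w := by
  classical
  funext k
  rw [h.shape_eq k]
  unfold shape
  have hsplit := Finset.card_filter_add_card_filter_not
    (s := Finset.univ.filter fun v : Fin n => eps w⁻¹ v = (k : ℕ) + 1)
    (p := fun v : Fin n => w⁻¹ v < p)
  rw [Finset.filter_filter, Finset.filter_filter] at hsplit
  have h1 : (Finset.univ.filter fun v : Fin n => eps w⁻¹ v = (k : ℕ) + 1 ∧ w⁻¹ v < p)
      = Finset.univ.filter fun v : Fin n =>
        (fun j : Fin n => j < p ∧ (j : ℕ) + ((w j : Fin n) : ℕ) = (k : ℕ)) (w⁻¹ v) := by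
    ext v
    simp only [Finset.mem_filter, Finset.mem_univ, true_and, w.apply_inv_self]
    constructor
    · rintro ⟨heps, hvp⟩
      rw [h.eps_inv_head (le_of_lt hvp)] at heps
      exact ⟨hvp, by omega⟩
    · rintro ⟨hvp, hk⟩
      rw [h.eps_inv_head (le_of_lt hvp)]
      exact ⟨by omega, hvp⟩
  have h2 : (Finset.univ.filter fun v : Fin n => eps w⁻¹ v = (k : ℕ) + 1 ∧ ¬ w⁻¹ v < p)
      = Finset.univ.filter fun v : Fin n => p ≤ w⁻¹ v ∧ w⁻¹ v = k := by
    ext v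
    simp only [Finset.mem_filter, Finset.mem_univ, true_and, not_lt]
    constructor
    · rintro ⟨heps, hpv⟩
      rw [h.eps_inv_tail hpv] at heps
      exact ⟨hpv, Fin.ext (by omega)⟩
    · rintro ⟨hpv, hvk⟩
      refine ⟨?_, hpv⟩
      rw [h.eps_inv_tail hpv, hvk]
  have h3 : (Finset.univ.filter fun v : Fin n => p ≤ w⁻¹ v ∧ w⁻¹ v = k).card
      = if (p : ℕ) ≤ (k : ℕ) then 1 else 0 := by
    by_cases hpk : (p : ℕ) ≤ (k : ℕ)
    · rw [if_pos hpk]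
      rw [show (Finset.univ.filter fun v : Fin n => p ≤ w⁻¹ v ∧ w⁻¹ v = k) = {w k} from by
        ext v
        simp only [Finset.mem_filter, Finset.mem_univ, true_and, Finset.mem_singleton]
        constructor
        · rintro ⟨_, hvk⟩
          rw [← hvk, w.apply_inv_self]
        · rintro rfl
          rw [w.inv_apply_self]
          exact ⟨hpk, rfl⟩]
      exact Finset.card_singleton _
    · rw [if_neg hpk]
      rw [Finset.card_eq_zero, Finset.filter_eq_empty_iff]
      rintro v - ⟨hpv, hvk⟩
      exact hpk (hvk ▸ hpv)
  have h4 : (Finset.univ.filter fun v : Fin n =>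
        (fun j : Fin n => j < p ∧ (j : ℕ) + ((w j : Fin n) : ℕ) = (k : ℕ)) (w⁻¹ v)).card
      = (Finset.univ.filter fun i : Fin n =>
        i < p ∧ (i : ℕ) + ((w i : Fin n) : ℕ) = (k : ℕ)).card :=
    card_filter_perm w⁻¹ (fun j : Fin n => j < p ∧ (j : ℕ) + ((w j : Fin n) : ℕ) = (k : ℕ))
  rw [h1, h2, h3] at hsplit
  rw [h4] at hsplit
  omega

theorem IsCV.shape_pos_iff {w : Equiv.Perm (Fin n)} {p : Fin n} (h : IsCV w p) (k : Fin n) :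
    1 ≤ shape w k ↔ (p : ℕ) ≤ (k : ℕ) := by
  rw [h.shape_eq k]
  by_cases hpk : (p : ℕ) ≤ (k : ℕ)
  · simp [hpk]
  · rw [if_neg hpk]
    push_neg at hpk
    have hempty : (Finset.univ.filter fun i : Fin n =>
        i < p ∧ (i : ℕ) + ((w i : Fin n) : ℕ) = (k : ℕ)).card = 0 := by
      rw [Finset.card_eq_zero, Finset.filter_eq_empty_iff]
      rintro i - ⟨hip, hk⟩
      have := h.head_lb (le_of_lt hip)
      omega
    rw [hempty]
    constructor <;> (intro hc; omega)
/-- On the head, `i + w i` is weakly decreasing. -/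
theorem IsCV.head_anti {w : Equiv.Perm (Fin n)} {p : Fin n} (h : IsCV w p) {i j : Fin n}
    (hij : i < j) (hjp : j ≤ p) :
    (j : ℕ) + ((w j : Fin n) : ℕ) ≤ (i : ℕ) + ((w i : Fin n) : ℕ) := by
  classical
  have himg : (Finset.Icc i j).image w ⊆ Finset.Icc (w j) (w i) := by
    intro v hv
    obtain ⟨t, ht, rfl⟩ := Finset.mem_image.mp hv
    rw [Finset.mem_Icc] at ht ⊢
    constructor
    · rcases lt_or_eq_of_le ht.2 with hlt | rfl
      · exact le_of_lt (h.1 t j hlt hjp)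
      · exact le_rfl
    · rcases lt_or_eq_of_le ht.1 with hlt | rfl
      · exact le_of_lt (h.1 i t hlt (le_trans ht.2 hjp))
      · exact le_rfl
  have hcard := Finset.card_le_card himg
  rw [Finset.card_image_of_injective _ w.injective, Fin.card_Icc, Fin.card_Icc] at hcard
  have hwlt : ((w j : Fin n) : ℕ) < ((w i : Fin n) : ℕ) := h.1 i j hij hjp
  have hij' : (i : ℕ) < (j : ℕ) := hij
  omega

/-- A canonical valley permutation is determined by its shape. -/
theorem IsCV.eq_of_shape_eq {w w' : Equiv.Perm (Fin n)} {p p' : Fin n}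
    (hw : IsCV w p) (hw' : IsCV w' p') (hs : shape w = shape w') : w = w' := by
  classical
  -- the valley positions agree
  have hpp : p = p' := by
    have h1 := (hw.shape_pos_iff p').mp (by rw [hs]; exact (hw'.shape_pos_iff p').mpr le_rfl)
    have h2 := (hw'.shape_pos_iff p).mp (by rw [← hs]; exact (hw.shape_pos_iff p).mpr le_rfl)
    exact Fin.ext (le_antisymm h1 h2)
  subst hpp
  -- the heads agree
  set m := (p : ℕ) with hm
  have hmn : m < n := p.isLt
  set f : ℕ → ℕ := fun i => if hi : i < n then i + ((w ⟨i, hi⟩ : Fin n) : ℕ) else 0 with hf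
  set g : ℕ → ℕ := fun i => if hi : i < n then i + ((w' ⟨i, hi⟩ : Fin n) : ℕ) else 0 with hg
  have hbridge : ∀ (u : Equiv.Perm (Fin n)) (k : ℕ),
      ((Finset.range m).filter fun i =>
          (if hi : i < n then i + ((u ⟨i, hi⟩ : Fin n) : ℕ) else 0) = k).card
        = (Finset.univ.filter fun i : Fin n =>
          i < p ∧ (i : ℕ) + ((u i : Fin n) : ℕ) = k).card := by
    intro u k
    apply Finset.card_nbij (fun i => if hi : i < n then (⟨i, hi⟩ : Fin n) else p)
    · intro x hx
      simp only [Finset.mem_coe, Finset.mem_filter, Finset.mem_range] at hx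
      have hxn : x < n := lt_trans hx.1 hmn
      rw [dif_pos hxn] at hx
      simp only [dif_pos hxn]
      simp only [Finset.mem_coe, Finset.mem_filter, Finset.mem_univ, true_and]
      exact ⟨hx.1, hx.2⟩
    · intro x hx y hy hxy
      simp only [Finset.coe_filter, Set.mem_setOf_eq, Finset.mem_range] at hx hy
      have hxn : x < n := lt_trans hx.1 hmn
      have hyn : y < n := lt_trans hy.1 hmn
      simp only [dif_pos hxn, dif_pos hyn] at hxy
      exact congrArg Fin.val (hxy : (⟨x, hxn⟩ : Fin n) = ⟨y, hyn⟩)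
    · intro v hv
      simp only [Finset.coe_filter, Set.mem_setOf_eq, Finset.mem_univ, true_and] at hv
      refine ⟨(v : ℕ), ?_, ?_⟩
      · simp only [Finset.coe_filter, Set.mem_setOf_eq, Finset.mem_range]
        refine ⟨hv.1, ?_⟩
        rw [dif_pos v.isLt]
        simp only [Fin.eta]
        exact hv.2
      · simp only [dif_pos v.isLt]
  have hcounts : ∀ k, ((Finset.range m).filter fun i => f i = k).card
      = ((Finset.range m).filter fun i => g i = k).card := by
    intro k
    rw [hf, hg, hbridge w k, hbridge w' k]
    by_cases hkn : k < n
    · have e1 := hw.shape_eq ⟨k, hkn⟩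
      have e2 := hw'.shape_eq ⟨k, hkn⟩
      rw [hs] at e1
      rw [e2] at e1
      exact (Nat.add_right_cancel e1).symm
    · have hzero : ∀ (u : Equiv.Perm (Fin n)), IsCV u p → (Finset.univ.filter fun i : Fin n =>
          i < p ∧ (i : ℕ) + ((u i : Fin n) : ℕ) = k).card = 0 := by
        intro u hu
        rw [Finset.card_eq_zero, Finset.filter_eq_empty_iff]
        rintro i - ⟨hip, hik⟩
        have := hu.head_ub (le_of_lt hip)
        omega
      rw [hzero w hw, hzero w' hw']
  have hsorted : ∀ (u : Equiv.Perm (Fin n)), IsCV u p → ∀ i j, i < j → j < m →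
      (fun x y => y ≤ x) (if hi : i < n then i + ((u ⟨i, hi⟩ : Fin n) : ℕ) else 0)
        (if hj : j < n then j + ((u ⟨j, hj⟩ : Fin n) : ℕ) else 0) := by
    intro u hu i j hij hjm
    have hin : i < n := by omega
    have hjn : j < n := by omega
    rw [dif_pos hin, dif_pos hjn]
    exact hu.head_anti (show (⟨i, hin⟩ : Fin n) < ⟨j, hjn⟩ from hij)
      (le_of_lt (show (⟨j, hjn⟩ : Fin n) < p from hjm))
  have hhead : ∀ i : Fin n, i < p → w i = w' i := by
    have heq := eqOn_of_sorted_counts (fun x y => y ≤ x) f g m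
      (hsorted w hw) (hsorted w' hw') hcounts
    intro i hip
    have := heq (i : ℕ) hip
    rw [hf, hg] at this
    simp only [dif_pos i.isLt] at this
    simp only [Fin.eta] at this
    exact Fin.ext (by omega)
  -- the tails agree
  have himgeq : (Finset.univ.filter fun j : Fin n => p ≤ j).image w
      = (Finset.univ.filter fun j : Fin n => p ≤ j).image w' := by
    have hcompl : ∀ u : Equiv.Perm (Fin n),
        (Finset.univ.filter fun j : Fin n => p ≤ j).image u
          = Finset.univ \ ((Finset.univ.filter fun j : Fin n => j < p).image u) := by
      intro u
      ext v
      simp only [Finset.mem_image, Finset.mem_sdiff, Finset.mem_filter, Finset.mem_univ,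
        true_and]
      constructor
      · rintro ⟨j, hpj, rfl⟩
        intro hex
        obtain ⟨j', hj', hjj'⟩ := hex
        have := u.injective hjj'
        rw [this] at hj'
        exact absurd hpj (not_le_of_gt hj')
      · intro hne
        refine ⟨u⁻¹ v, ?_, u.apply_inv_self v⟩
        by_contra hc
        push_neg at hc
        exact hne ⟨u⁻¹ v, hc, u.apply_inv_self v⟩
    rw [hcompl w, hcompl w']
    congr 1
    apply Finset.image_congr
    intro j hj
    simp only [Finset.coe_filter, Set.mem_setOf_eq] at hj
    exact hhead j hj.2
  have htail : ∀ i : Fin n, p ≤ i → w i = w' i := by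
    set T := (Finset.univ.filter fun j : Fin n => p ≤ j).image w with hT
    have hcardT : T.card = n - m := by
      rw [hT, Finset.card_image_of_injective _ w.injective, card_filter_le]
    have htmono : ∀ u : Equiv.Perm (Fin n), IsCV u p →
        StrictMono (fun j : Fin (n - m) => u ⟨m + (j : ℕ), by omega⟩) := by
      intro u hu j j' hjj'
      exact hu.2 _ _ (by rw [Fin.le_def]; simp [hm]) (by rw [Fin.lt_def]; simpa using hjj')
    have hwT : ∀ x : Fin (n - m), w ⟨m + (x : ℕ), by omega⟩ ∈ T := by
      intro x
      rw [hT]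
      exact Finset.mem_image_of_mem w (by
        simp only [Finset.mem_filter, Finset.mem_univ, true_and]
        rw [Fin.le_def]; simp [hm])
    have hw'T : ∀ x : Fin (n - m), w' ⟨m + (x : ℕ), by omega⟩ ∈ T := by
      intro x
      rw [himgeq]
      exact Finset.mem_image_of_mem w' (by
        simp only [Finset.mem_filter, Finset.mem_univ, true_and]
        rw [Fin.le_def]; simp [hm])
    have e1 := Finset.orderEmbOfFin_unique hcardT hwT (htmono w hw)
    have e2 := Finset.orderEmbOfFin_unique hcardT hw'T (htmono w' hw')
    intro i hpi
    have : i = ⟨m + ((i : ℕ) - m), by omega⟩ := Fin.ext (by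
      simp only []
      have : m ≤ (i : ℕ) := hpi
      omega)
    rw [this]
    have hlt : (i : ℕ) - m < n - m := by
      have := i.isLt; have : m ≤ (i : ℕ) := hpi; omega
    calc w ⟨m + ((i : ℕ) - m), by omega⟩
        = (fun j : Fin (n - m) => w ⟨m + (j : ℕ), by omega⟩) ⟨(i : ℕ) - m, hlt⟩ := rfl
      _ = (fun j : Fin (n - m) => w' ⟨m + (j : ℕ), by omega⟩) ⟨(i : ℕ) - m, hlt⟩ := by
          rw [show (fun j : Fin (n - m) => w ⟨m + (j : ℕ), by omega⟩)
              = (fun j : Fin (n - m) => w' ⟨m + (j : ℕ), by omega⟩) from e1.trans e2.symm]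
      _ = w' ⟨m + ((i : ℕ) - m), by omega⟩ := rfl
  apply Equiv.ext
  intro i
  rcases lt_or_ge (i : ℕ) m with hlt | hle
  · exact hhead i hlt
  · exact htail i hle
theorem count_map_range (h : ℕ → ℕ) (m k : ℕ) :
    Multiset.count k (Multiset.map h (Finset.range m).val)
      = ((Finset.range m).filter fun i => h i = k).card := by
  classical
  rw [Multiset.count_map]
  have h2 : ((Finset.range m).filter fun i => h i = k).card
      = Multiset.card (Multiset.filter (fun i => h i = k) (Finset.range m).val) := rfl
  rw [h2]
  congr 1
  exact Multiset.filter_congr (fun x _ => by constructor <;> (intro hh; exact hh.symm))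

theorem exists_isCV_shape (α : Fin n → ℕ) (a : ℕ) (ha : a < n)
    (hsum : ∑ k, α k = n) (hα : ∀ k : Fin n, 1 ≤ α k ↔ a ≤ (k : ℕ)) :
    ∃ w : Equiv.Perm (Fin n), IsCV w ⟨a, ha⟩ ∧ shape w = α := by
  classical
  have hn : 0 < n := lt_of_le_of_lt (Nat.zero_le a) ha
  have h00 : ((⟨0, hn⟩ : Fin n) : ℕ) = 0 := rfl
  -- the multiset of blob labels for the head, with multiplicity `α k - 1` at `k`
  set M : Multiset ℕ :=
    (Finset.univ.val : Multiset (Fin n)).bind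
      (fun k : Fin n => Multiset.replicate (α k - 1) ((k : ℕ))) with hM
  have hcount : ∀ k : Fin n, M.count ((k : ℕ)) = α k - 1 := by
    intro k
    rw [hM, Multiset.count_bind]
    have h1 : (Multiset.map
        (fun j : Fin n => Multiset.count ((k : ℕ)) (Multiset.replicate (α j - 1) ((j : ℕ))))
        Finset.univ.val).sum
        = ∑ j : Fin n, if k = j then α j - 1 else 0 := by
      rw [Finset.sum]
      congr 1
      apply Multiset.map_congr rfl
      intro j _
      rw [Multiset.count_replicate]
      congr 1
      simp [Fin.ext_iff, eq_comm]
    rw [h1, Finset.sum_ite_eq]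
    simp
  have hmemM : ∀ x ∈ M, a ≤ x ∧ x < n := by
    intro x hx
    rw [hM, Multiset.mem_bind] at hx
    obtain ⟨j, -, hx⟩ := hx
    rw [Multiset.mem_replicate] at hx
    obtain ⟨hne, rfl⟩ := hx
    refine ⟨(hα j).mp (by omega), j.isLt⟩
  have hMcard : Multiset.card M = a := by
    rw [hM, Multiset.card_bind]
    simp only [Function.comp_def]
    have h1 : (Multiset.map (fun j : Fin n => Multiset.card
        (Multiset.replicate (α j - 1) ((j : ℕ)))) Finset.univ.val).sum
        = ∑ j : Fin n, (α j - 1) := by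
      rw [Finset.sum]
      congr 1
      apply Multiset.map_congr rfl
      intro j _
      rw [Multiset.card_replicate]
    rw [h1]
    have h2 : ∑ j : Fin n, ((α j - 1) + (if a ≤ (j : ℕ) then 1 else 0)) = n := by
      rw [show ∑ j : Fin n, ((α j - 1) + (if a ≤ (j : ℕ) then 1 else 0)) = ∑ j, α j from
        Finset.sum_congr rfl (by
          intro j _
          by_cases hj : a ≤ (j : ℕ)
          · have := (hα j).mpr hj
            simp only [hj, if_true]
            omega
          · have : ¬ 1 ≤ α j := fun hc => hj ((hα j).mp hc)
            simp only [hj, if_false]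
            omega)]
      exact hsum
    rw [Finset.sum_add_distrib] at h2
    have h3 : ∑ j : Fin n, (if a ≤ (j : ℕ) then 1 else 0) = n - a := by
      rw [← Finset.card_filter]
      have h4 : (Finset.univ.filter fun j : Fin n => a ≤ (j : ℕ))
          = Finset.univ.filter fun j : Fin n => (⟨a, ha⟩ : Fin n) ≤ j := by
        ext j
        simp [Fin.le_def]
      rw [h4, card_filter_le]
    rw [h3] at h2
    omega
  -- the decreasingly sorted list of `M`
  set L : List ℕ := (Multiset.sort M (· ≤ ·)).reverse with hL
  have hLlen : L.length = a := by
    rw [hL, List.length_reverse, Multiset.length_sort, hMcard]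
  have hLmurityset : (↑L : Multiset ℕ) = M := by
    rw [hL, ← Multiset.coe_reverse, List.reverse_reverse, Multiset.sort_eq]
  have hLmem : ∀ i, i < a → a ≤ L.getD i 0 ∧ L.getD i 0 < n := by
    intro i hi
    have hi' : i < L.length := by omega
    rw [List.getD_eq_getElem _ _ hi']
    apply hmemM
    rw [← hLmurityset]
    exact List.getElem_mem _
  have hLsorted : ∀ i j, i < j → j < a → L.getD j 0 ≤ L.getD i 0 := by
    intro i j hij hja
    have hj' : j < L.length := by omega
    have hi' : i < L.length := by omega
    rw [List.getD_eq_getElem _ _ hi', List.getD_eq_getElem _ _ hj']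
    have hsorted : List.Pairwise (fun x y => y ≤ x) L := by
      rw [hL, List.pairwise_reverse]
      exact Multiset.pairwise_sort M _
    exact List.pairwise_iff_getElem.mp hsorted i j hi' hj' hij
  -- the head values
  set d : ℕ → ℕ := fun i => L.getD i 0 - i with hd
  have hd_eq : ∀ i, i < a → i + d i = L.getD i 0 := by
    intro i hi
    have := (hLmem i hi).1
    rw [hd]
    simp only []
    omega
  have hd_anti : ∀ i j, i < j → j < a → d j < d i := by
    intro i j hij hja
    have h1 := hLsorted i j hij hja
    have h2 := (hLmem j hja).1
    have h3 := (hLmem i (lt_trans hij hja)).1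
    rw [hd]
    simp only []
    omega
  have hd_bound : ∀ i, i < a → 1 ≤ d i ∧ i + d i < n := by
    intro i hi
    have h1 := (hLmem i hi).1
    have h2 := (hLmem i hi).2
    rw [hd]
    simp only []
    omega
  have hd_lt : ∀ i, i < a → d i < n := by
    intro i hi
    have := hd_bound i hi
    omega
  -- the head value set
  set D : Finset (Fin n) := Finset.univ.filter (fun v : Fin n => ∃ i, i < a ∧ d i = (v : ℕ))
    with hD
  have hDmem : ∀ v : Fin n, v ∈ D ↔ ∃ i, i < a ∧ d i = (v : ℕ) := by
    intro v
    rw [hD]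
    simp
  have hDcard : D.card = a := by
    rw [← Finset.card_range a]
    symm
    apply Finset.card_bij (fun (i : ℕ) (hi : i ∈ Finset.range a) =>
      (⟨d i, hd_lt i (Finset.mem_range.mp hi)⟩ : Fin n))
    · intro i hi
      rw [hDmem]
      exact ⟨i, Finset.mem_range.mp hi, rfl⟩
    · intro i hi j hj hij
      have h1 : d i = d j := congrArg Fin.val hij
      rcases lt_trichotomy i j with hlt | heq | hgt
      · exact absurd h1 (ne_of_gt (hd_anti i j hlt (Finset.mem_range.mp hj)))
      · exact heq
      · exact absurd h1 (ne_of_lt (hd_anti j i hgt (Finset.mem_range.mp hi)))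
    · intro v hv
      obtain ⟨i, hi, hdi⟩ := (hDmem v).mp hv
      exact ⟨i, Finset.mem_range.mpr hi, Fin.ext hdi⟩
  have h0D : (⟨0, hn⟩ : Fin n) ∉ D := by
    rw [hDmem]
    rintro ⟨i, hi, hdi⟩
    have := hd_bound i hi
    omega
  have hDccard : Dᶜ.card = n - a := by
    rw [Finset.card_compl, hDcard]
    simp
  set φ := D.orderEmbOfFin hDcard with hφ
  set ψ := Dᶜ.orderEmbOfFin hDccard with hψ
  have hφD : ∀ x, φ x ∈ D := fun x => Finset.orderEmbOfFin_mem D hDcard x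
  have hψD : ∀ x, ψ x ∈ Dᶜ := fun x => Finset.orderEmbOfFin_mem Dᶜ hDccard x
  have hφpos : ∀ x, 1 ≤ ((φ x : Fin n) : ℕ) := by
    intro x
    obtain ⟨i, hi, hdi⟩ := (hDmem _).mp (hφD x)
    have := hd_bound i hi
    omega
  set w0 : Fin n → Fin n := fun i =>
    if h : (i : ℕ) < a then φ ⟨a - 1 - (i : ℕ), by omega⟩
    else ψ ⟨(i : ℕ) - a, by have := i.isLt; omega⟩ with hw0
  have winj : Function.Injective w0 := by
    intro x y hxy
    rw [hw0] at hxy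
    simp only [] at hxy
    by_cases hx : (x : ℕ) < a <;> by_cases hy : (y : ℕ) < a
    · rw [dif_pos hx, dif_pos hy] at hxy
      have := congrArg Fin.val (φ.injective hxy)
      simp at this
      exact Fin.ext (by omega)
    · rw [dif_pos hx, dif_neg hy] at hxy
      have h1 := hφD ⟨a - 1 - (x : ℕ), by omega⟩
      rw [hxy] at h1
      exact absurd h1 (Finset.mem_compl.mp (hψD _))
    · rw [dif_neg hx, dif_pos hy] at hxy
      have h1 := hφD ⟨a - 1 - (y : ℕ), by omega⟩
      rw [← hxy] at h1
      exact absurd h1 (Finset.mem_compl.mp (hψD _))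
    · rw [dif_neg hx, dif_neg hy] at hxy
      have := congrArg Fin.val (ψ.injective hxy)
      simp at this
      exact Fin.ext (by omega)
  set w : Equiv.Perm (Fin n) := Equiv.ofBijective w0 (Finite.injective_iff_bijective.mp winj)
    with hw
  have hwapp : ∀ i, w i = w0 i := fun i => rfl
  have hψ0 : (ψ (⟨0, by omega⟩ : Fin (n - a)) : Fin n) = ⟨0, hn⟩ := by
    rw [hψ, Finset.orderEmbOfFin_zero hDccard (by omega)]
    have hmem : (⟨0, hn⟩ : Fin n) ∈ Dᶜ := Finset.mem_compl.mpr h0D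
    have h1 := Finset.min'_le _ _ hmem
    apply Fin.ext
    have h2 : (0 : ℕ) ≤ ((Dᶜ.min' ⟨_, hmem⟩ : Fin n) : ℕ) := Nat.zero_le _
    have h3 : ((Dᶜ.min' ⟨_, hmem⟩ : Fin n) : ℕ) ≤ 0 := h1
    omega
  have hCV : IsCV w ⟨a, ha⟩ := by
    constructor
    · intro i j hij hjp
      have hia : (i : ℕ) < a := lt_of_lt_of_le hij hjp
      rw [hwapp, hwapp, hw0]
      simp only []
      rw [dif_pos hia]
      by_cases hja : (j : ℕ) < a
      · rw [dif_pos hja]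
        apply φ.strictMono
        rw [Fin.mk_lt_mk]
        have hij' : (i : ℕ) < (j : ℕ) := hij
        omega
      · have hja' : ¬ ((j : ℕ) < a) := hja
        rw [dif_neg hja']
        have hjeq : (j : ℕ) - a = 0 := by
          have : (j : ℕ) ≤ a := hjp
          omega
        rw [show (⟨(j : ℕ) - a, by have := j.isLt; omega⟩ : Fin (n - a))
            = ⟨0, by omega⟩ from Fin.ext hjeq, hψ0]
        rw [Fin.lt_def]
        have := hφpos ⟨a - 1 - (i : ℕ), by omega⟩
        simp only [Fin.val_mk]
        omega
    · intro i j hai hij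
      have hia : ¬ ((i : ℕ) < a) := by
        have : a ≤ (i : ℕ) := hai
        omega
      have hja : ¬ ((j : ℕ) < a) := by
        have h1 : (i : ℕ) < (j : ℕ) := hij
        omega
      rw [hwapp, hwapp, hw0]
      simp only []
      rw [dif_neg hia, dif_neg hja]
      apply ψ.strictMono
      rw [Fin.mk_lt_mk]
      have h1 : (i : ℕ) < (j : ℕ) := hij
      omega
  refine ⟨w, hCV, ?_⟩
  -- the head values of `w` are exactly `d`
  have hwhead : ∀ i : Fin n, (i : ℕ) < a → ((w i : Fin n) : ℕ) = d (i : ℕ) := by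
    set F : ℕ → ℕ := fun i => if h : i < n then ((w0 ⟨i, h⟩ : Fin n) : ℕ) else 0 with hF
    have hFdec : ∀ i j, i < j → j < a → F j < F i := by
      intro i j hij hja
      have hin : i < n := lt_trans (lt_trans hij hja) ha
      have hjn : j < n := lt_trans hja ha
      rw [hF]
      simp only []
      rw [dif_pos hin, dif_pos hjn]
      have := hCV.1 ⟨i, hin⟩ ⟨j, hjn⟩ (by rw [Fin.mk_lt_mk]; exact hij)
        (by rw [Fin.le_def]; simp only [Fin.val_mk]; omega)
      rw [hwapp, hwapp] at this
      exact this
    have himgF : (Finset.range a).image F = D.image Fin.val := by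
      ext x
      simp only [Finset.mem_image, Finset.mem_range]
      constructor
      · rintro ⟨i, hi, rfl⟩
        have hin : i < n := lt_trans hi ha
        refine ⟨w0 ⟨i, hin⟩, ?_, ?_⟩
        · rw [hw0]
          simp only []
          rw [dif_pos hi]
          exact hφD _
        · rw [hF]
          simp only []
          rw [dif_pos hin]
      · rintro ⟨v, hv, rfl⟩
        have hrange : v ∈ Set.range φ := by
          rw [hφ, Finset.range_orderEmbOfFin]
          exact hv
        obtain ⟨y, hy⟩ := hrange
        refine ⟨a - 1 - (y : ℕ), by have := y.isLt; omega, ?_⟩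
        have hia : a - 1 - (y : ℕ) < a := by
          have : (y : ℕ) < a := y.isLt
          omega
        have hin : a - 1 - (y : ℕ) < n := lt_trans hia ha
        rw [hF]
        simp only []
        rw [dif_pos hin]
        congr 1
        rw [hw0]
        simp only []
        rw [dif_pos hia]
        rw [← hy]
        congr 1
        apply Fin.ext
        simp only [Fin.val_mk]
        have : (y : ℕ) < a := y.isLt
        omega
    have himgd : (Finset.range a).image d = D.image Fin.val := by
      ext x
      simp only [Finset.mem_image, Finset.mem_range]
      constructor
      · rintro ⟨i, hi, rfl⟩
        exact ⟨⟨d i, hd_lt i hi⟩, (hDmem _).mpr ⟨i, hi, rfl⟩, rfl⟩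
      · rintro ⟨v, hv, rfl⟩
        obtain ⟨i, hi, hdi⟩ := (hDmem v).mp hv
        exact ⟨i, hi, hdi⟩
    have hFinj : ∀ i j, i < a → j < a → F i = F j → i = j := by
      intro i j hi hj hij
      rcases lt_trichotomy i j with hlt | heq | hgt
      · exact absurd hij (ne_of_gt (hFdec i j hlt hj))
      · exact heq
      · exact absurd hij (ne_of_lt (hFdec j i hgt hi))
    have hdinj : ∀ i j, i < a → j < a → d i = d j → i = j := by
      intro i j hi hj hij
      rcases lt_trichotomy i j with hlt | heq | hgt
      · exact absurd hij (ne_of_gt (hd_anti i j hlt hj))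
      · exact heq
      · exact absurd hij (ne_of_lt (hd_anti j i hgt hi))
    have heqFd := eqOn_of_sorted_counts (fun x y => y ≤ x) F d a
      (fun i j hij hja => le_of_lt (hFdec i j hij hja))
      (fun i j hij hja => le_of_lt (hd_anti i j hij hja))
      (counts_eq_of_image_eq F d a hFinj hdinj (himgF.trans himgd.symm))
    intro i hi
    have := heqFd (i : ℕ) hi
    rw [hF] at this
    simp only [dif_pos i.isLt, Fin.eta] at this
    rw [hwapp]
    exact this
  -- conclude: the shape of `w` is `α`
  funext k
  rw [hCV.shape_eq k]
  have hbridge : (Finset.univ.filter fun i : Fin n =>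
      i < (⟨a, ha⟩ : Fin n) ∧ (i : ℕ) + ((w i : Fin n) : ℕ) = (k : ℕ)).card
      = ((Finset.range a).filter fun i => i + d i = (k : ℕ)).card := by
    apply Finset.card_bij (fun (i : Fin n) (_ : i ∈ _) => (i : ℕ))
    · intro i hi
      simp only [Finset.mem_filter, Finset.mem_univ, true_and] at hi
      have hia : (i : ℕ) < a := hi.1
      simp only [Finset.mem_filter, Finset.mem_range]
      refine ⟨hia, ?_⟩
      rw [← hwhead i hia]
      exact hi.2
    · intro i hi j hj hij
      exact Fin.ext hij
    · intro x hx
      simp only [Finset.mem_filter, Finset.mem_range] at hx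
      have hxn : x < n := lt_trans hx.1 ha
      refine ⟨⟨x, hxn⟩, ?_, rfl⟩
      simp only [Finset.mem_filter, Finset.mem_univ, true_and]
      refine ⟨by rw [Fin.mk_lt_mk]; exact hx.1, ?_⟩
      rw [hwhead ⟨x, hxn⟩ hx.1]
      exact hx.2
  have hcnt : ((Finset.range a).filter fun i => i + d i = (k : ℕ)).card = α k - 1 := by
    have hc1 : ((Finset.range a).filter fun i => i + d i = (k : ℕ))
        = ((Finset.range a).filter fun i => L.getD i 0 = (k : ℕ)) := by
      apply Finset.filter_congr
      intro i hi
      rw [hd_eq i (Finset.mem_range.mp hi)]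
    rw [hc1, ← count_map_range (fun i => L.getD i 0) a (k : ℕ)]
    have hc2 : Multiset.map (fun i => L.getD i 0) (Finset.range a).val = (↑L : Multiset ℕ) := by
      have hlist : (List.range a).map (fun i => L.getD i 0) = L := by
        apply List.ext_getElem
        · simp [hLlen]
        · intro i h1 h2
          simp only [List.getElem_map, List.getElem_range]
          rw [List.getD_eq_getElem]
      calc Multiset.map (fun i => L.getD i 0) (Finset.range a).val
          = (↑((List.range a).map fun i => L.getD i 0) : Multiset ℕ) := rfl
        _ = (↑L : Multiset ℕ) := by rw [hlist]
    rw [hc2, hLmurityset]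
    exact hcount k
  rw [hbridge, hcnt]
  simp only [Fin.val_mk]
  by_cases hk : a ≤ (k : ℕ)
  · have := (hα k).mpr hk
    rw [if_pos hk]
    omega
  · have : ¬ 1 ≤ α k := fun hc => hk ((hα k).mp hc)
    rw [if_neg hk]
    omega
/-- For a composition `α` of `n` whose support is an upper interval
(`α_k ≥ 1` exactly when `t ≤ k ≤ n` in 1-based indexing), there is exactly one valley
permutation of shape `α`, and exactly one inverse valley permutation of shape `α`,
namely its inverse. -/
theorem existsUnique_valley_of_shape (n : ℕ) (α : Fin n → ℕ)
    (hsum : ∑ k, α k = n)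
    (hsupp : ∃ t : ℕ, ∀ k : Fin n, 1 ≤ α k ↔ t ≤ (k : ℕ) + 1) :
    (∃! f : Equiv.Perm (Fin n), Valley f ∧ shape f = α) ∧
    ∀ f : Equiv.Perm (Fin n), Valley f → shape f = α →
      ∀ g : Equiv.Perm (Fin n), (Valley g⁻¹ ∧ shape g = α) ↔ g = f⁻¹ := by
  classical
  rcases Nat.eq_zero_or_pos n with rfl | hn
  · -- degenerate case `n = 0`
    have hperm : ∀ u v : Equiv.Perm (Fin 0), u = v := by
      intro u v
      apply Equiv.ext
      intro i
      exact i.elim0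
    have hval : ∀ u : Equiv.Perm (Fin 0), Valley u := by
      intro u
      exact ⟨0, fun i _ _ _ => i.elim0, fun i _ _ _ => i.elim0⟩
    have hsh : ∀ u : Equiv.Perm (Fin 0), shape u = α := by
      intro u
      funext k
      exact k.elim0
    refine ⟨⟨1, ⟨hval 1, hsh 1⟩, fun y _ => hperm y 1⟩, ?_⟩
    intro f _ _ g
    constructor
    · intro _
      exact hperm g f⁻¹
    · intro _
      exact ⟨hval _, hsh _⟩
  · obtain ⟨t, ht⟩ := hsupp
    have htn : t ≤ n := by
      by_contra hc
      push_neg at hc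
      have hzero : ∀ k : Fin n, α k = 0 := by
        intro k
        have h1 : ¬ 1 ≤ α k := by
          rw [ht k]
          have := k.isLt
          omega
        omega
      rw [Finset.sum_congr rfl (fun k _ => hzero k), Finset.sum_const, smul_eq_mul,
        mul_zero] at hsum
      omega
    have ha : t - 1 < n := by omega
    have hα : ∀ k : Fin n, 1 ≤ α k ↔ t - 1 ≤ (k : ℕ) := by
      intro k
      rw [ht k]
      omega
    obtain ⟨w, hCV, hshape⟩ := exists_isCV_shape α (t - 1) ha hsum hα
    have huniq : ∀ f : Equiv.Perm (Fin n), Valley f → shape f = α → f = w := by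
      intro f hf hsf
      exact IsCV.eq_of_shape_eq (hf.isCV hn) hCV (hsf.trans hshape.symm)
    refine ⟨⟨w, ⟨hCV.valley, hshape⟩, fun y hy => huniq y hy.1 hy.2⟩, ?_⟩
    intro f hfval hfsh g
    constructor
    · rintro ⟨hgval, hgsh⟩
      have hginvsh : shape g⁻¹ = α := by
        have h1 := IsCV.shape_inv (hgval.isCV hn)
        rw [inv_inv] at h1
        rw [← h1]
        exact hgsh
      have h2 : g⁻¹ = f := IsCV.eq_of_shape_eq (hgval.isCV hn) (hfval.isCV hn)
        (hginvsh.trans hfsh.symm)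
      rw [← h2, inv_inv]
    · rintro rfl
      constructor
      · rw [inv_inv]
        exact hfval
      · rw [IsCV.shape_inv (hfval.isCV hn), hfsh]

end RajRegularity
end
end

section
/- Let w be a permutation of {1,…,n} and 1 ≤ i ≤ n−1 with w(i) > w(i+1), and let w·s_i be the permutation obtained by exchanging the entries in positions i and i+1. Set p = ε_i(w) and q = ε_{i+1}(w). If p > q, then ε_i(w·s_i) = q, ε_{i+1}(w·s_i) = p, and ε_j(w·s_i) = ε_j(w) for all j ∉ {i, i+1}; in particular w and w·s_i have the same shape and raj(w) = raj(w·s_i). If p ≤ q, then α(w) ≻ α(w·s_i) in dominance order and raj(w) > raj(w·s_i). -/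
open scoped Classical

noncomputable section

namespace RajRegularity

variable {n : ℕ}

set_option linter.unusedSectionVars false

section AuxRaj

/-- validity predicate -/
def Valid (w : Equiv.Perm (Fin n)) (i : Fin n) (s : Finset (Fin n)) : Prop :=
  i ∈ s ∧ (∀ j ∈ s, i ≤ j) ∧ ∀ j ∈ s, ∀ k ∈ s, j < k → w j < w k

lemma le_lisFrom {w : Equiv.Perm (Fin n)} {i : Fin n} {s : Finset (Fin n)}
    (h : Valid w i s) : s.card ≤ lisFrom w i :=
  Finset.le_sup (Finset.mem_filter.mpr ⟨Finset.mem_univ _, h⟩)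

lemma lisFrom_le' {w : Equiv.Perm (Fin n)} {i : Fin n} {m : ℕ}
    (h : ∀ s : Finset (Fin n), Valid w i s → s.card ≤ m) : lisFrom w i ≤ m := by
  apply Finset.sup_le
  intro s hs
  exact h s (Finset.mem_filter.mp hs).2

lemma exists_valid (w : Equiv.Perm (Fin n)) (i : Fin n) :
    ∃ s : Finset (Fin n), Valid w i s ∧ s.card = lisFrom w i := by
  classical
  have hne : (Finset.univ.filter fun s : Finset (Fin n) =>
      i ∈ s ∧ (∀ j ∈ s, i ≤ j) ∧ ∀ j ∈ s, ∀ k ∈ s, j < k → w j < w k).Nonempty := by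
    refine ⟨{i}, Finset.mem_filter.mpr ⟨Finset.mem_univ _, ?_, ?_, ?_⟩⟩
    · simp
    · simp
    · intro a ha b hb hab
      simp at ha hb; subst ha; subst hb; exact absurd hab (lt_irrefl _)
  obtain ⟨s, hs, hcard⟩ := Finset.exists_mem_eq_sup _ hne Finset.card
  exact ⟨s, (Finset.mem_filter.mp hs).2, hcard.symm⟩

lemma one_le_lisFrom (w : Equiv.Perm (Fin n)) (i : Fin n) : 1 ≤ lisFrom w i := by
  have : ({i} : Finset (Fin n)).card ≤ lisFrom w i := by
    apply le_lisFrom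
    refine ⟨by simp, by simp, ?_⟩
    intro a ha b hb hab
    simp at ha hb; subst ha; subst hb; exact absurd hab (lt_irrefl _)
  simpa using this

lemma lisFrom_le_sub (w : Equiv.Perm (Fin n)) (i : Fin n) : lisFrom w i ≤ n - (i : ℕ) := by
  apply lisFrom_le'
  intro s hs
  have : s ⊆ Finset.Ici i := fun m hm => Finset.mem_Ici.mpr (hs.2.1 m hm)
  calc s.card ≤ (Finset.Ici i).card := Finset.card_le_card this
    _ = n - (i : ℕ) := by rw [Fin.card_Ici]

lemma eps_eq (w : Equiv.Perm (Fin n)) (i : Fin n) :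
    eps w i = n + 1 - lisFrom w i := by
  have h1 := lisFrom_le_sub w i
  have h2 : (i : ℕ) < n := i.isLt
  unfold eps rajCode
  omega


lemma swap_strictMonoOn {i j : Fin n} (hij : (j : ℕ) = (i : ℕ) + 1)
    {S : Finset (Fin n)} (hS : i ∉ S ∨ j ∉ S) {m m' : Fin n}
    (hm : m ∈ S) (hm' : m' ∈ S) (h : m < m') :
    Equiv.swap i j m < Equiv.swap i j m' := by
  have hmm' : (m : ℕ) < (m' : ℕ) := h
  have hne : (m : ℕ) ≠ (m' : ℕ) := Nat.ne_of_lt hmm'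
  have hnotboth : ¬((m : ℕ) = i ∧ (m' : ℕ) = j) := by
    rintro ⟨h1, h2⟩
    have : m = i := Fin.ext h1
    have : m' = j := Fin.ext h2
    rcases hS with hS | hS
    · exact hS (by rwa [← ‹m = i›])
    · exact hS (by rwa [← ‹m' = j›])
  rw [Equiv.swap_apply_def, Equiv.swap_apply_def]
  rw [Fin.lt_def]
  have hiff : ∀ a b : Fin n, (a = b) ↔ ((a : ℕ) = (b : ℕ)) := fun a b => Fin.ext_iff
  split_ifs <;> (simp only [Fin.ext_iff] at *) <;> omega

lemma valid_image_swap {i j : Fin n} (hij : (j : ℕ) = (i : ℕ) + 1)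
    (w : Equiv.Perm (Fin n)) {k : Fin n} {S : Finset (Fin n)}
    (hv : Valid w k S) (hS : i ∉ S ∨ j ∉ S) :
    Valid (w * Equiv.swap i j) (Equiv.swap i j k) (S.image (Equiv.swap i j)) := by
  obtain ⟨hk, hlb, hinc⟩ := hv
  refine ⟨Finset.mem_image_of_mem _ hk, ?_, ?_⟩
  · intro m hm
    obtain ⟨m₀, hm₀, rfl⟩ := Finset.mem_image.mp hm
    rcases eq_or_lt_of_le (hlb m₀ hm₀) with h | h
    · exact le_of_eq (by rw [h])
    · exact le_of_lt (swap_strictMonoOn hij hS hk hm₀ h)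
  · intro m hm m' hm' hlt
    obtain ⟨m₀, hm₀, rfl⟩ := Finset.mem_image.mp hm
    obtain ⟨m₀', hm₀', rfl⟩ := Finset.mem_image.mp hm'
    have h01 : m₀ < m₀' := by
      rcases lt_trichotomy m₀ m₀' with h | h | h
      · exact h
      · subst h; exact absurd hlt (lt_irrefl _)
      · exact absurd (swap_strictMonoOn hij hS hm₀' hm₀ h) (asymm hlt)
    have := hinc m₀ hm₀ m₀' hm₀' h01
    simpa [Equiv.Perm.mul_apply] using this

lemma card_image_swap {i j : Fin n} (S : Finset (Fin n)) :
    (S.image (Equiv.swap i j)).card = S.card :=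
  Finset.card_image_of_injective _ (Equiv.injective _)


section Main

variable {w : Equiv.Perm (Fin n)} {i j : Fin n}
  (hij : (j : ℕ) = (i : ℕ) + 1) (hdes : w j < w i)

include hij

lemma hilt : i < j := by rw [Fin.lt_def]; omega

lemma swap_cancel (w : Equiv.Perm (Fin n)) :
    w * Equiv.swap i j * Equiv.swap i j = w := by
  rw [mul_assoc, Equiv.swap_mul_self, mul_one]

include hdes

/-- no valid set for (w,i) contains j -/
lemma j_not_mem {S : Finset (Fin n)} (hv : Valid w i S) : j ∉ S := by
  intro hj
  exact absurd (hv.2.2 i hv.1 j hj (hilt hij)) (not_lt.mpr (le_of_lt hdes))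

/-- L1 : lisFrom (w s) j = lisFrom w i -/
lemma lis_swap_j : lisFrom (w * Equiv.swap i j) j = lisFrom w i := by
  apply le_antisymm
  · apply lisFrom_le'
    intro S hS
    have hiS : i ∉ S := fun h => absurd (hS.2.1 i h) (not_le.mpr (hilt hij))
    have := valid_image_swap hij (w * Equiv.swap i j) hS (Or.inl hiS)
    rw [swap_cancel hij, Equiv.swap_apply_right] at this
    rw [← card_image_swap (i := i) (j := j) S]
    exact le_lisFrom this
  · apply lisFrom_le'
    intro S hS
    have hjS : j ∉ S := j_not_mem hij hdes hS
    have := valid_image_swap hij w hS (Or.inr hjS)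
    rw [Equiv.swap_apply_left] at this
    rw [← card_image_swap (i := i) (j := j) S]
    exact le_lisFrom this

/-- L2b : lisFrom w j ≤ lisFrom (w s) i -/
lemma lis_swap_i_ge_B : lisFrom w j ≤ lisFrom (w * Equiv.swap i j) i := by
  apply lisFrom_le'
  intro S hS
  have hiS : i ∉ S := fun h => absurd (hS.2.1 i h) (not_le.mpr (hilt hij))
  have := valid_image_swap hij w hS (Or.inl hiS)
  rw [Equiv.swap_apply_right] at this
  rw [← card_image_swap (i := i) (j := j) S]
  exact le_lisFrom this

/-- L2a : lisFrom w i + 1 ≤ lisFrom (w s) i -/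
lemma lis_swap_i_ge_A : lisFrom w i + 1 ≤ lisFrom (w * Equiv.swap i j) i := by
  obtain ⟨S, hS, hcard⟩ := exists_valid w i
  have hjS : j ∉ S := j_not_mem hij hdes hS
  have hmem : ∀ m ∈ S.erase i, (j : ℕ) < (m : ℕ) := by
    intro m hm
    obtain ⟨hmi, hmS⟩ := Finset.mem_erase.mp hm
    have h1 : i ≤ m := hS.2.1 m hmS
    have h2 : (m : ℕ) ≠ (j : ℕ) := fun h => hjS (by rwa [show m = j from Fin.ext h] at hmS)
    have h3 : (m : ℕ) ≠ (i : ℕ) := fun h => hmi (Fin.ext h)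
    have := Fin.le_def.mp h1
    omega
  set T : Finset (Fin n) := insert i (insert j (S.erase i)) with hT
  have hvT : Valid (w * Equiv.swap i j) i T := by
    refine ⟨Finset.mem_insert_self _ _, ?_, ?_⟩
    · intro m hm
      rcases Finset.mem_insert.mp hm with rfl | hm
      · exact le_refl _
      rcases Finset.mem_insert.mp hm with rfl | hm
      · exact le_of_lt (hilt hij)
      · exact le_of_lt (Fin.lt_def.mpr (by have := hmem m hm; omega))
    · intro a ha b hb hab
      have val : ∀ m ∈ S.erase i, (w * Equiv.swap i j) m = w m := by
        intro m hm
        have := hmem m hm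
        have hmi : m ≠ i := fun h => by subst h; omega
        have hmj : m ≠ j := fun h => by subst h; omega
        simp [Equiv.Perm.mul_apply, Equiv.swap_apply_of_ne_of_ne hmi hmj]
      have wi : (w * Equiv.swap i j) i = w j := by
        simp [Equiv.Perm.mul_apply]
      have wj : (w * Equiv.swap i j) j = w i := by
        simp [Equiv.Perm.mul_apply]
      rcases Finset.mem_insert.mp ha with ha' | ha
      · rw [ha'] at hab ⊢
        rcases Finset.mem_insert.mp hb with hb' | hb
        · rw [hb'] at hab; exact absurd hab (lt_irrefl _)
        rcases Finset.mem_insert.mp hb with hb' | hb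
        · rw [hb']; rw [wi, wj]; exact hdes
        · rw [wi, val b hb]
          calc w j < w i := hdes
            _ < w b := hS.2.2 i hS.1 b (Finset.mem_of_mem_erase hb)
              (Fin.lt_def.mpr (by have := hmem b hb; omega))
      rcases Finset.mem_insert.mp ha with ha' | ha
      · rw [ha'] at hab ⊢
        rcases Finset.mem_insert.mp hb with hb' | hb
        · rw [hb'] at hab; exact absurd hab (by rw [Fin.lt_def]; omega)
        rcases Finset.mem_insert.mp hb with hb' | hb
        · rw [hb'] at hab; exact absurd hab (lt_irrefl _)
        · rw [wj, val b hb]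
          exact hS.2.2 i hS.1 b (Finset.mem_of_mem_erase hb)
            (Fin.lt_def.mpr (by have := hmem b hb; omega))
      · rcases Finset.mem_insert.mp hb with hb' | hb
        · rw [hb'] at hab; exact absurd hab (by have := hmem a ha; rw [Fin.lt_def]; omega)
        rcases Finset.mem_insert.mp hb with hb' | hb
        · rw [hb'] at hab; exact absurd hab (by have := hmem a ha; rw [Fin.lt_def]; omega)
        · rw [val a ha, val b hb]
          exact hS.2.2 a (Finset.mem_of_mem_erase ha) b (Finset.mem_of_mem_erase hb) hab
  have hcardT : T.card = S.card + 1 := by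
    have h1 : j ∉ S.erase i := fun h => hjS (Finset.mem_of_mem_erase h)
    have h2 : i ∉ insert j (S.erase i) := by
      intro h
      rcases Finset.mem_insert.mp h with h | h
      · exact absurd (congrArg Fin.val h) (by omega)
      · exact absurd h (Finset.notMem_erase i S)
    rw [hT, Finset.card_insert_of_notMem h2, Finset.card_insert_of_notMem h1,
      Finset.card_erase_of_mem hS.1]
    have : 1 ≤ S.card := Finset.card_pos.mpr ⟨i, hS.1⟩
    omega
  calc lisFrom w i + 1 = T.card := by rw [hcardT, hcard]
    _ ≤ _ := le_lisFrom hvT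

/-- L2c : lisFrom (w s) i ≤ max (A+1) B -/
lemma lis_swap_i_le :
    lisFrom (w * Equiv.swap i j) i ≤ max (lisFrom w i + 1) (lisFrom w j) := by
  apply lisFrom_le'
  intro S hS
  by_cases hj : j ∈ S
  · -- drop i, transfer to (w, i)
    have hScard : 1 ≤ S.card := Finset.card_pos.mpr ⟨i, hS.1⟩
    set S' := S.erase i with hS'
    have hv' : Valid (w * Equiv.swap i j) j S' := by
      refine ⟨Finset.mem_erase.mpr ⟨fun h => by have := congrArg Fin.val h; omega, hj⟩, ?_, ?_⟩
      · intro m hm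
        obtain ⟨hmi, hmS⟩ := Finset.mem_erase.mp hm
        have h1 := Fin.le_def.mp (hS.2.1 m hmS)
        have h3 : (m : ℕ) ≠ (i : ℕ) := fun h => hmi (Fin.ext h)
        rw [Fin.le_def]; omega
      · intro a ha b hb hab
        exact hS.2.2 a (Finset.mem_of_mem_erase ha) b (Finset.mem_of_mem_erase hb) hab
    have hiS' : i ∉ S' := Finset.notMem_erase _ _
    have := valid_image_swap hij (w * Equiv.swap i j) hv' (Or.inl hiS')
    rw [swap_cancel hij, Equiv.swap_apply_right] at this
    have hc : (S'.image (Equiv.swap i j)).card = S.card - 1 := by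
      rw [card_image_swap, hS', Finset.card_erase_of_mem hS.1]
    have := le_lisFrom this
    rw [hc] at this
    have : S.card ≤ lisFrom w i + 1 := by omega
    exact le_trans this (le_max_left _ _)
  · -- i ∈ S, j ∉ S : transfer to (w, j)
    have := valid_image_swap hij (w * Equiv.swap i j) hS (Or.inr hj)
    rw [swap_cancel hij, Equiv.swap_apply_left] at this
    have := le_lisFrom this
    rw [card_image_swap] at this
    exact le_trans this (le_max_right _ _)

/-- L3 : positions above j unchanged -/
lemma lis_swap_gt {k : Fin n} (hk : (j : ℕ) < (k : ℕ)) :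
    lisFrom (w * Equiv.swap i j) k = lisFrom w k := by
  have hkk : Equiv.swap i j k = k :=
    Equiv.swap_apply_of_ne_of_ne (fun h => by subst h; omega) (fun h => by subst h; omega)
  have notmem : ∀ (u : Equiv.Perm (Fin n)) (S : Finset (Fin n)), Valid u k S → i ∉ S := by
    intro u S hS h
    have := Fin.le_def.mp (hS.2.1 i h)
    omega
  apply le_antisymm
  · apply lisFrom_le'
    intro S hS
    have := valid_image_swap hij (w * Equiv.swap i j) hS (Or.inl (notmem _ _ hS))
    rw [swap_cancel hij, hkk] at this
    rw [← card_image_swap (i := i) (j := j) S]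
    exact le_lisFrom this
  · apply lisFrom_le'
    intro S hS
    have := valid_image_swap hij w hS (Or.inl (notmem _ _ hS))
    rw [hkk] at this
    rw [← card_image_swap (i := i) (j := j) S]
    exact le_lisFrom this

/-- L4a : positions below i can only grow -/
lemma lis_swap_lt_ge {k : Fin n} (hk : (k : ℕ) < (i : ℕ)) :
    lisFrom w k ≤ lisFrom (w * Equiv.swap i j) k := by
  have hkk : Equiv.swap i j k = k :=
    Equiv.swap_apply_of_ne_of_ne (fun h => by subst h; omega) (fun h => by subst h; omega)
  apply lisFrom_le'
  intro S hS
  have hor : i ∉ S ∨ j ∉ S := by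
    by_contra h
    push_neg at h
    exact absurd (hS.2.2 i h.1 j h.2 (hilt hij)) (not_lt.mpr (le_of_lt hdes))
  have := valid_image_swap hij w hS hor
  rw [hkk] at this
  rw [← card_image_swap (i := i) (j := j) S]
  exact le_lisFrom this

end Main

section Main2

variable {w : Equiv.Perm (Fin n)} {i j : Fin n}
  (hij : (j : ℕ) = (i : ℕ) + 1) (hdes : w j < w i)

include hij hdes

/-- L4b : positions below i don't grow when lisFrom w i < lisFrom w j -/
lemma lis_swap_lt_le {k : Fin n} (hk : (k : ℕ) < (i : ℕ))
    (hAB : lisFrom w i < lisFrom w j) :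
    lisFrom (w * Equiv.swap i j) k ≤ lisFrom w k := by
  have hkk : Equiv.swap i j k = k :=
    Equiv.swap_apply_of_ne_of_ne (fun h => by subst h; omega) (fun h => by subst h; omega)
  have wi : (w * Equiv.swap i j) i = w j := by simp [Equiv.Perm.mul_apply]
  have wj : (w * Equiv.swap i j) j = w i := by simp [Equiv.Perm.mul_apply]
  apply lisFrom_le'
  intro S hS
  by_cases hboth : i ∈ S ∧ j ∈ S
  · obtain ⟨hiS, hjS⟩ := hboth
    set P := S.filter (fun m : Fin n => (m : ℕ) < (i : ℕ)) with hP
    set Q := S.filter (fun m : Fin n => (j : ℕ) < (m : ℕ)) with hQ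
    have valP : ∀ m ∈ P, (w * Equiv.swap i j) m = w m := by
      intro m hm
      obtain ⟨hmS, hmlt⟩ := Finset.mem_filter.mp hm
      exact congrArg w (Equiv.swap_apply_of_ne_of_ne
        (fun h => by subst h; omega) (fun h => by subst h; omega))
    have valQ : ∀ m ∈ Q, (w * Equiv.swap i j) m = w m := by
      intro m hm
      obtain ⟨hmS, hmlt⟩ := Finset.mem_filter.mp hm
      exact congrArg w (Equiv.swap_apply_of_ne_of_ne
        (fun h => by subst h; omega) (fun h => by subst h; omega))
    -- Claim 1 : 1 + Q.card ≤ lisFrom w i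
    have claim1 : 1 + Q.card ≤ lisFrom w i := by
      have hvQ : Valid w i (insert i Q) := by
        refine ⟨Finset.mem_insert_self _ _, ?_, ?_⟩
        · intro m hm
          rcases Finset.mem_insert.mp hm with h | h
          · rw [h]
          · obtain ⟨hmS, hmlt⟩ := Finset.mem_filter.mp h
            rw [Fin.le_def]; omega
        · intro a ha b hb hab
          rcases Finset.mem_insert.mp ha with ha' | ha'
          · rcases Finset.mem_insert.mp hb with hb' | hb'
            · rw [ha', hb'] at hab; exact absurd hab (lt_irrefl _)
            · rw [ha']
              obtain ⟨hbS, hblt⟩ := Finset.mem_filter.mp hb'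
              have := hS.2.2 j hjS b hbS (Fin.lt_def.mpr hblt)
              rw [wj, valQ b hb'] at this
              exact this
          · rcases Finset.mem_insert.mp hb with hb' | hb'
            · obtain ⟨haS, halt⟩ := Finset.mem_filter.mp ha'
              rw [hb'] at hab
              exact absurd hab (by rw [Fin.lt_def]; omega)
            · obtain ⟨haS, halt⟩ := Finset.mem_filter.mp ha'
              obtain ⟨hbS, hblt⟩ := Finset.mem_filter.mp hb'
              have := hS.2.2 a haS b hbS hab
              rw [valQ a ha', valQ b hb'] at this
              exact this
      have hiQ : i ∉ Q := by
        intro h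
        obtain ⟨-, h2⟩ := Finset.mem_filter.mp h
        omega
      have := le_lisFrom hvQ
      rw [Finset.card_insert_of_notMem hiQ] at this
      omega
    -- Claim 2 : P.card + lisFrom w j ≤ lisFrom w k
    obtain ⟨T, hT, hTcard⟩ := exists_valid w j
    have hTlb : ∀ m ∈ T, (j : ℕ) ≤ (m : ℕ) := fun m hm => Fin.le_def.mp (hT.2.1 m hm)
    have hdisj : Disjoint P T := by
      rw [Finset.disjoint_left]
      intro m hm hm'
      obtain ⟨-, h2⟩ := Finset.mem_filter.mp hm
      have := hTlb m hm'
      omega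
    have claim2 : P.card + lisFrom w j ≤ lisFrom w k := by
      have hvPT : Valid w k (P ∪ T) := by
        refine ⟨Finset.mem_union_left _ (Finset.mem_filter.mpr ⟨hS.1, hk⟩), ?_, ?_⟩
        · intro m hm
          rcases Finset.mem_union.mp hm with h | h
          · exact hS.2.1 m (Finset.mem_filter.mp h).1
          · have := hTlb m h
            rw [Fin.le_def]; omega
        · intro a ha b hb hab
          rcases Finset.mem_union.mp ha with ha' | ha'
          · rcases Finset.mem_union.mp hb with hb' | hb'
            · obtain ⟨haS, -⟩ := Finset.mem_filter.mp ha'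
              obtain ⟨hbS, -⟩ := Finset.mem_filter.mp hb'
              have := hS.2.2 a haS b hbS hab
              rw [valP a ha', valP b hb'] at this
              exact this
            · -- a ∈ P, b ∈ T : w a < w i’s image = w j ≤ w b
              obtain ⟨haS, halt⟩ := Finset.mem_filter.mp ha'
              have h1 : w a < w j := by
                have := hS.2.2 a haS i hiS (Fin.lt_def.mpr halt)
                rw [valP a ha', wi] at this
                exact this
              have h2 : w j ≤ w b := by
                rcases eq_or_lt_of_le (hT.2.1 b hb') with h | h
                · rw [← h]
                · exact le_of_lt (hT.2.2 j hT.1 b hb' h)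
              exact lt_of_lt_of_le h1 h2
          · rcases Finset.mem_union.mp hb with hb' | hb'
            · obtain ⟨-, hblt⟩ := Finset.mem_filter.mp hb'
              have := hTlb a ha'
              exact absurd hab (by rw [Fin.lt_def]; omega)
            · exact hT.2.2 a ha' b hb' hab
      have := le_lisFrom hvPT
      rw [Finset.card_union_of_disjoint hdisj, hTcard] at this
      exact this
    -- Claim 3 : S.card ≤ P.card + 2 + Q.card
    have claim3 : S.card ≤ P.card + 2 + Q.card := by
      have hsub : S ⊆ (P ∪ {i, j}) ∪ Q := by
        intro m hm
        rcases lt_trichotomy ((m : ℕ)) ((i : ℕ)) with h | h | h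
        · exact Finset.mem_union_left _ (Finset.mem_union_left _
            (Finset.mem_filter.mpr ⟨hm, h⟩))
        · exact Finset.mem_union_left _ (Finset.mem_union_right _
            (by simp [Fin.ext_iff]; omega))
        · rcases lt_trichotomy ((m : ℕ)) ((j : ℕ)) with h' | h' | h'
          · omega
          · exact Finset.mem_union_left _ (Finset.mem_union_right _
              (by simp [Fin.ext_iff]; omega))
          · exact Finset.mem_union_right _ (Finset.mem_filter.mpr ⟨hm, h'⟩)
      calc S.card ≤ ((P ∪ {i, j}) ∪ Q).card := Finset.card_le_card hsub
        _ ≤ (P ∪ {i, j}).card + Q.card := Finset.card_union_le _ _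
        _ ≤ (P.card + ({i, j} : Finset (Fin n)).card) + Q.card :=
            Nat.add_le_add_right (Finset.card_union_le _ _) _
        _ ≤ P.card + 2 + Q.card := by
            have : ({i, j} : Finset (Fin n)).card ≤ 2 := Finset.card_insert_le _ _ |>.trans (by simp)
            omega
    omega
  · have hor : i ∉ S ∨ j ∉ S := by tauto
    have := valid_image_swap hij (w * Equiv.swap i j) hS hor
    rw [mul_assoc, Equiv.swap_mul_self, mul_one, hkk] at this
    have := le_lisFrom this
    rw [card_image_swap] at this
    exact this

end Main2

lemma eps_le (w : Equiv.Perm (Fin n)) (t : Fin n) : eps w t ≤ n := by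
  have := one_le_lisFrom w t; rw [eps_eq]; omega

lemma le_eps (w : Equiv.Perm (Fin n)) (t : Fin n) : (t : ℕ) + 1 ≤ eps w t := by
  unfold eps; omega

/-- the fiber map -/
def fib (w : Equiv.Perm (Fin n)) (t : Fin n) : Fin n :=
  ⟨eps w t - 1, by have h1 := eps_le w t; have h2 := le_eps w t; have := t.isLt; omega⟩

lemma fiber_eq (w : Equiv.Perm (Fin n)) (b : Fin n) :
    Finset.univ.filter (fun t => fib w t = b) =
      Finset.univ.filter (fun t : Fin n => eps w t = (b : ℕ) + 1) := by
  ext t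
  simp only [Finset.mem_filter, Finset.mem_univ, true_and, fib, Fin.ext_iff]
  have := le_eps w t
  constructor <;> intro h <;> omega

lemma shape_eq_fib (w : Equiv.Perm (Fin n)) (b : Fin n) :
    shape w b = (Finset.univ.filter (fun t => fib w t = b)).card := by
  rw [fiber_eq]; rfl

lemma sum_eps_raj (w : Equiv.Perm (Fin n)) :
    ∑ t, eps w t = (∑ t : Fin n, ((t : ℕ) + 1)) + raj w := by
  unfold eps raj
  rw [← Finset.sum_add_distrib]

lemma shape_tail (w : Equiv.Perm (Fin n)) (m : Fin n) :
    ∑ k ∈ Finset.univ.filter (fun k : Fin n => m ≤ k), shape w k =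
      (Finset.univ.filter fun t : Fin n => (m : ℕ) + 1 ≤ eps w t).card := by
  rw [Finset.card_eq_sum_card_fiberwise
    (f := fib w) (t := Finset.univ.filter (fun k : Fin n => m ≤ k))
    (fun t ht => by
      simp only [Finset.mem_coe, Finset.mem_filter, Finset.mem_univ, true_and] at ht ⊢
      rw [Fin.le_def]
      simp only [fib]
      omega)]
  apply Finset.sum_congr rfl
  intro b hb
  simp only [Finset.mem_filter, Finset.mem_univ, true_and] at hb
  rw [shape_eq_fib]
  congr 1
  ext t
  simp only [Finset.mem_filter, Finset.mem_univ, true_and, fib, Fin.ext_iff]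
  have h1 := le_eps w t
  have h2 := Fin.le_def.mp hb
  constructor <;> intro h <;> omega

lemma sum_eps_shape (w : Equiv.Perm (Fin n)) :
    ∑ t, eps w t = ∑ k : Fin n, ((k : ℕ) + 1) * shape w k := by
  rw [← Finset.sum_fiberwise_of_maps_to (g := fib w) (t := Finset.univ)
    (fun t _ => Finset.mem_univ _) (eps w)]
  apply Finset.sum_congr rfl
  intro b _
  rw [shape_eq_fib]
  rw [Finset.sum_congr rfl (g := fun _ => (b : ℕ) + 1)
    (fun t ht => by
      simp only [Finset.mem_filter, Finset.mem_univ, true_and, fib, Fin.ext_iff] at ht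
      have := le_eps w t
      show eps w t = (b : ℕ) + 1
      omega)]
  rw [Finset.sum_const, smul_eq_mul, mul_comm]


end AuxRaj

/-- Let `i, j` be consecutive positions (`j = i + 1`) with `w i > w j`,
and let `w * swap i j` be `w` with the entries in positions `i` and `j` exchanged.
Writing `p = ε_i(w)` and `q = ε_{i+1}(w)`: if `p > q` then the two `ε`-values at
positions `i, j` are exchanged, all other `ε`-values are unchanged, and `w` and
`w·s_i` have the same shape and the same Rajchgot index; if `p ≤ q` then
`α(w) ≻ α(w·s_i)` in dominance order and `raj(w) > raj(w·s_i)`. -/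
theorem eps_of_right_cover (n : ℕ) (w : Equiv.Perm (Fin n)) (i j : Fin n)
    (hij : (j : ℕ) = (i : ℕ) + 1) (hdes : w j < w i) :
    (eps w j < eps w i →
      eps (w * Equiv.swap i j) i = eps w j ∧
      eps (w * Equiv.swap i j) j = eps w i ∧
      (∀ k : Fin n, k ≠ i → k ≠ j → eps (w * Equiv.swap i j) k = eps w k) ∧
      shape (w * Equiv.swap i j) = shape w ∧
      raj (w * Equiv.swap i j) = raj w) ∧
    (eps w i ≤ eps w j →
      Dominates (shape w) (shape (w * Equiv.swap i j)) ∧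
      shape w ≠ shape (w * Equiv.swap i j) ∧
      raj (w * Equiv.swap i j) < raj w) := by
  have hin : (i : ℕ) < n := i.isLt
  have hjn : (j : ℕ) < n := j.isLt
  have hA1 := one_le_lisFrom w i
  have hB1 := one_le_lisFrom w j
  have hAn := lisFrom_le_sub w i
  have hBn := lisFrom_le_sub w j
  have epsi := eps_eq w i
  have epsj := eps_eq w j
  have eps'i := eps_eq (w * Equiv.swap i j) i
  have eps'j := eps_eq (w * Equiv.swap i j) j
  have lis'j := lis_swap_j hij hdes
  constructor
  · -- case p > q
    intro hlt
    have hAB : lisFrom w i < lisFrom w j := by omega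
    have lis'i : lisFrom (w * Equiv.swap i j) i = lisFrom w j := by
      have h1 := lis_swap_i_le hij hdes
      have h2 := lis_swap_i_ge_B hij hdes
      have h3 : max (lisFrom w i + 1) (lisFrom w j) = lisFrom w j := by omega
      omega
    have e'i : eps (w * Equiv.swap i j) i = eps w j := by rw [eps'i, lis'i, epsj]
    have e'j : eps (w * Equiv.swap i j) j = eps w i := by rw [eps'j, lis'j, epsi]
    have e'k : ∀ k : Fin n, k ≠ i → k ≠ j → eps (w * Equiv.swap i j) k = eps w k := by
      intro k hki hkj
      have h1 : (k : ℕ) ≠ (i : ℕ) := fun h => hki (Fin.ext h)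
      have h2 : (k : ℕ) ≠ (j : ℕ) := fun h => hkj (Fin.ext h)
      rcases (by omega : (k : ℕ) < (i : ℕ) ∨ (j : ℕ) < (k : ℕ)) with hk | hk
      · rw [eps_eq, eps_eq,
          le_antisymm (lis_swap_lt_le hij hdes hk hAB) (lis_swap_lt_ge hij hdes hk)]
      · rw [eps_eq, eps_eq, lis_swap_gt hij hdes hk]
    have ecomp : ∀ k, eps (w * Equiv.swap i j) k = eps w (Equiv.swap i j k) := by
      intro k
      by_cases h1 : k = i
      · subst h1; rw [Equiv.swap_apply_left]; exact e'i
      by_cases h2 : k = j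
      · subst h2; rw [Equiv.swap_apply_right]; exact e'j
      · rw [Equiv.swap_apply_of_ne_of_ne h1 h2]; exact e'k k h1 h2
    have hshape : shape (w * Equiv.swap i j) = shape w := by
      funext b
      show (Finset.univ.filter fun t : Fin n => eps (w * Equiv.swap i j) t = (b : ℕ) + 1).card
        = (Finset.univ.filter fun t : Fin n => eps w t = (b : ℕ) + 1).card
      have himg : (Finset.univ.filter fun t : Fin n => eps (w * Equiv.swap i j) t = (b : ℕ) + 1)
          = (Finset.univ.filter fun t : Fin n => eps w t = (b : ℕ) + 1).image (Equiv.swap i j) := by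
        ext t
        simp only [Finset.mem_filter, Finset.mem_univ, true_and, Finset.mem_image]
        constructor
        · intro h
          refine ⟨Equiv.swap i j t, ?_, by rw [Equiv.swap_apply_self]⟩
          rw [← ecomp]; exact h
        · rintro ⟨t', ht', rfl⟩
          rw [ecomp, Equiv.swap_apply_self]; exact ht'
      rw [himg, Finset.card_image_of_injective _ (Equiv.injective _)]
    have hraj : raj (w * Equiv.swap i j) = raj w := by
      have h1 := sum_eps_raj w
      have h2 := sum_eps_raj (w * Equiv.swap i j)
      have h3 : ∑ t, eps (w * Equiv.swap i j) t = ∑ t, eps w t := by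
        calc ∑ t, eps (w * Equiv.swap i j) t = ∑ t, eps w (Equiv.swap i j t) :=
          Finset.sum_congr rfl (fun t _ => ecomp t)
        _ = ∑ t, eps w t := Equiv.sum_comp (Equiv.swap i j) (eps w)
      omega
    exact ⟨e'i, e'j, e'k, hshape, hraj⟩
  · -- case p ≤ q
    intro hle
    have hBA : lisFrom w j ≤ lisFrom w i := by omega
    have lis'iA := lis_swap_i_ge_A hij hdes
    have epsle : ∀ k, eps (w * Equiv.swap i j) k ≤ eps w k := by
      intro k
      by_cases h1 : k = i
      · subst h1; omega
      by_cases h2 : k = j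
      · subst h2; rw [eps'j, lis'j, epsj]; omega
      have hk1 : (k : ℕ) ≠ (i : ℕ) := fun h => h1 (Fin.ext h)
      have hk2 : (k : ℕ) ≠ (j : ℕ) := fun h => h2 (Fin.ext h)
      rcases (by omega : (k : ℕ) < (i : ℕ) ∨ (j : ℕ) < (k : ℕ)) with hk | hk
      · have := lis_swap_lt_ge hij hdes hk
        rw [eps_eq, eps_eq]; omega
      · rw [eps_eq, eps_eq, lis_swap_gt hij hdes hk]
    have epsilt : eps (w * Equiv.swap i j) i < eps w i := by omega
    have hsumlt : ∑ t, eps (w * Equiv.swap i j) t < ∑ t, eps w t :=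
      Finset.sum_lt_sum (fun t _ => epsle t) ⟨i, Finset.mem_univ i, epsilt⟩
    refine ⟨?_, ?_, ?_⟩
    · intro m
      rw [shape_tail, shape_tail]
      apply Finset.card_le_card
      intro t ht
      simp only [Finset.mem_filter, Finset.mem_univ, true_and] at ht ⊢
      exact le_trans ht (epsle t)
    · intro h
      have h1 := sum_eps_shape w
      have h2 := sum_eps_shape (w * Equiv.swap i j)
      rw [← h] at h2
      omega
    · have h1 := sum_eps_raj w
      have h2 := sum_eps_raj (w * Equiv.swap i j)
      omega

end RajRegularity
end
end
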